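/- arXiv:2206.05118 — 6 statements merged into one kernel-verified Lean document; each statement's English description precedes it below -/
import Mathlib

section
/- Let f be a set of natural numbers, d a real constant with d ≠ 0, and suppose there is a constant C₀ > 0 such that |π_f(x) − d·x/ln x| ≤ C₀·x/ln²x for all x ≥ 2. Let g : ℝ → ℝ be monotone with a continuous derivative on [2, ∞). Then there is a constant C > 0 such that for all x ≥ 2: |∑_{p prime, p ≤ x, p ∈ f} g(p) − d·x·g(x)/ln x + d·∫_2^x t·g'(t)/ln t dt| ≤ C·( x·|g(x)|/ln²x + ∫_2^x t·|g'(t)|/ln²t dt ). -/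
open Filter Finset MeasureTheory

open scoped Classical in
noncomputable def cfunX (f : Set ℕ) : ℕ → ℝ := fun k => if k.Prime ∧ k ∈ f then 1 else 0

lemma cfunX_nonneg (f : Set ℕ) (k : ℕ) : 0 ≤ cfunX f k := by
  unfold cfunX; split_ifs <;> norm_num

noncomputable def SfunX (f : Set ℕ) : ℝ → ℝ := fun t => ∑ k ∈ Finset.Icc 0 ⌊t⌋₊, cfunX f k

lemma SfunX_mono (f : Set ℕ) : Monotone (SfunX f) := fun t₁ t₂ h =>
  Finset.sum_le_sum_of_subset_of_nonneg
    (Finset.Icc_subset_Icc_right (Nat.floor_le_floor h)) (fun k _ _ => cfunX_nonneg f k)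

/-- `primeCountIn f t` is the number of primes `p ≤ t` with `p ∈ f`. -/
noncomputable def primeCountIn (f : Set ℕ) (t : ℝ) : ℕ :=
  {p : ℕ | p.Prime ∧ p ∈ f ∧ (p : ℝ) ≤ t}.ncard

open scoped Classical in
/-- `primeSumIn f g x` is the sum of `g p` over primes `p ≤ x` with `p ∈ f`. -/
noncomputable def primeSumIn (f : Set ℕ) (g : ℝ → ℝ) (x : ℝ) : ℝ :=
  ∑ p ∈ (Finset.range (⌊x⌋₊ + 1)).filter (fun p => p.Prime ∧ p ∈ f), g p

open scoped Classical in
lemma SfunX_key (f : Set ℕ) (t : ℝ) (ht : 0 ≤ t) : SfunX f t = (primeCountIn f t : ℝ) := by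
  have hset : {p : ℕ | p.Prime ∧ p ∈ f ∧ (p : ℝ) ≤ t} =
      ↑((Finset.range (⌊t⌋₊ + 1)).filter fun p => p.Prime ∧ p ∈ f) := by
    ext p
    simp only [Set.mem_setOf_eq, Finset.coe_filter, Finset.mem_range, Nat.lt_succ_iff,
      Nat.le_floor_iff ht]
    tauto
  rw [primeCountIn, hset, Set.ncard_coe_finset]
  rw [SfunX, ← Finset.Ico_add_one_right_eq_Icc, ← Finset.range_eq_Ico]
  simp [cfunX, Finset.sum_boole]

open scoped Classical in
lemma primeSumIn_eq (f : Set ℕ) (g : ℝ → ℝ) (x : ℝ) :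
    primeSumIn f g x = ∑ k ∈ Finset.Icc 0 ⌊x⌋₊, g k * cfunX f k := by
  rw [← Finset.Ico_add_one_right_eq_Icc, ← Finset.range_eq_Ico, primeSumIn, Finset.sum_filter]
  refine Finset.sum_congr rfl fun k _ => ?_
  unfold cfunX
  split_ifs <;> simp

lemma cfunX_zero (f : Set ℕ) : cfunX f 0 = 0 := by simp [cfunX, Nat.not_prime_zero]
lemma cfunX_one (f : Set ℕ) : cfunX f 1 = 0 := by simp [cfunX, Nat.not_prime_one]

theorem stmt4 (f : Set ℕ) (d : ℝ) (hd : d ≠ 0) (C₀ : ℝ) (hC₀ : 0 < C₀)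
    (hpi : ∀ x : ℝ, 2 ≤ x →
      |(primeCountIn f x : ℝ) - d * x / Real.log x| ≤ C₀ * x / (Real.log x) ^ 2)
    (g g' : ℝ → ℝ)
    (hmono : MonotoneOn g (Set.Ici (2 : ℝ)) ∨ AntitoneOn g (Set.Ici (2 : ℝ)))
    (hderiv : ∀ t ∈ Set.Ici (2 : ℝ), HasDerivAt g (g' t) t)
    (hcont : ContinuousOn g' (Set.Ici (2 : ℝ))) :
    ∃ C : ℝ, 0 < C ∧ ∀ x : ℝ, 2 ≤ x →
      |primeSumIn f g x - d * x * g x / Real.log x +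
          d * ∫ t in (2 : ℝ)..x, t * g' t / Real.log t| ≤
        C * (x * |g x| / (Real.log x) ^ 2 +
          ∫ t in (2 : ℝ)..x, t * |g' t| / (Real.log t) ^ 2) := by
  classical
  refine ⟨C₀, hC₀, fun x hx => ?_⟩
  have hx0 : (0 : ℝ) ≤ x := by linarith
  have hfloorx : 2 ≤ ⌊x⌋₊ := Nat.le_floor (by exact_mod_cast hx)
  have hdiff : ∀ t ∈ Set.Icc (2 : ℝ) x, DifferentiableAt ℝ g t :=
    fun t ht => (hderiv t ht.1).differentiableAt
  have hderiv_eq : Set.EqOn (deriv g) g' (Set.Icc 2 x) := fun t ht => (hderiv t ht.1).deriv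
  have hg'cont : ContinuousOn g' (Set.Icc 2 x) := hcont.mono (fun t ht => ht.1)
  have hint : IntegrableOn (deriv g) (Set.Icc 2 x) :=
    (hg'cont.integrableOn_Icc).congr_fun (fun t ht => (hderiv_eq ht).symm) measurableSet_Icc
  have habel := sum_mul_eq_sub_sub_integral_mul (cfunX f) (a := 2) (b := x) (f := g)
    (by norm_num) hx hdiff hint
  rw [show ⌊(2:ℝ)⌋₊ = 2 by norm_num] at habel
  have h2 : ∑ k ∈ Finset.Icc 0 2, cfunX f k = cfunX f 2 := by
    norm_num [show Finset.Icc 0 2 = ({0, 1, 2} : Finset ℕ) from rfl, cfunX_zero, cfunX_one]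
  have hsplit : primeSumIn f g x =
      g 2 * cfunX f 2 + ∑ k ∈ Finset.Ioc 2 ⌊x⌋₊, g k * cfunX f k := by
    rw [primeSumIn_eq, Finset.Icc_eq_cons_Ioc (Nat.zero_le _), Finset.sum_cons,
      ← Finset.sum_Ioc_consecutive _ (by norm_num : 0 ≤ 2) hfloorx]
    have h02 : ∑ k ∈ Finset.Ioc (0:ℕ) 2, g k * cfunX f k = g 2 * cfunX f 2 := by
      norm_num [show Finset.Ioc (0:ℕ) 2 = ({1, 2} : Finset ℕ) from rfl, cfunX_one]
    rw [h02, cfunX_zero]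
    ring
  have hIeq : ∫ t in Set.Ioc 2 x, deriv g t * ∑ k ∈ Finset.Icc 0 ⌊t⌋₊, cfunX f k =
      ∫ t in Set.Ioc 2 x, g' t * SfunX f t := by
    refine setIntegral_congr_fun measurableSet_Ioc (fun t ht => ?_)
    rw [hderiv_eq ⟨le_of_lt ht.1, ht.2⟩]; rfl
  have hxS : ∑ k ∈ Finset.Icc 0 ⌊x⌋₊, cfunX f k = SfunX f x := rfl
  have hmain : primeSumIn f g x = g x * SfunX f x - ∫ t in Set.Ioc 2 x, g' t * SfunX f t := by
    rw [hsplit, habel, hIeq, h2, hxS]; ring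

  -- analytic part
  have hlog : ∀ t : ℝ, 2 ≤ t → 0 < Real.log t := fun t ht => Real.log_pos (by linarith)
  have hlogcont : ContinuousOn (fun t : ℝ => Real.log t) (Set.Icc 2 x) :=
    Real.continuousOn_log.mono (fun t ht => by
      simp only [Set.mem_compl_iff, Set.mem_singleton_iff]
      have := ht.1; intro h; rw [h] at this; norm_num at this)
  have hdivcont : ContinuousOn (fun t : ℝ => d * t / Real.log t) (Set.Icc 2 x) :=
    (continuousOn_const.mul continuousOn_id).div hlogcont
      (fun t ht => ne_of_gt (hlog t ht.1))
  have hvcont : ContinuousOn (fun t => g' t * (d * t / Real.log t)) (Set.Icc 2 x) :=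
    hg'cont.mul hdivcont
  have hvint : IntegrableOn (fun t => g' t * (d * t / Real.log t)) (Set.Ioc 2 x) :=
    hvcont.integrableOn_Icc.mono_set Set.Ioc_subset_Icc_self
  have hbcont : ContinuousOn (fun t => C₀ * (t * |g' t| / (Real.log t) ^ 2)) (Set.Icc 2 x) :=
    continuousOn_const.mul ((continuousOn_id.mul hg'cont.abs).div (hlogcont.pow 2)
      (fun t ht => pow_ne_zero 2 (ne_of_gt (hlog t ht.1))))
  have hbint : IntegrableOn (fun t => C₀ * (t * |g' t| / (Real.log t) ^ 2)) (Set.Ioc 2 x) :=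
    hbcont.integrableOn_Icc.mono_set Set.Ioc_subset_Icc_self
  have hbnd : ∀ t ∈ Set.Ioc (2:ℝ) x,
      ‖g' t * (SfunX f t - d * t / Real.log t)‖ ≤ C₀ * (t * |g' t| / (Real.log t) ^ 2) := by
    intro t ht
    have h2t : (2:ℝ) ≤ t := le_of_lt ht.1
    have hp := hpi t h2t
    rw [← SfunX_key f t (by linarith)] at hp
    rw [Real.norm_eq_abs, abs_mul]
    calc |g' t| * |SfunX f t - d * t / Real.log t|
        ≤ |g' t| * (C₀ * t / Real.log t ^ 2) := mul_le_mul_of_nonneg_left hp (abs_nonneg _)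
      _ = C₀ * (t * |g' t| / Real.log t ^ 2) := by ring
  have hwmeas : AEStronglyMeasurable (fun t => g' t * (SfunX f t - d * t / Real.log t))
      (volume.restrict (Set.Ioc 2 x)) := by
    refine AEStronglyMeasurable.mul ?_ (AEStronglyMeasurable.sub ?_ ?_)
    · exact (hcont.mono (fun t (ht : t ∈ Set.Ioc (2:ℝ) x) => le_of_lt ht.1)).aestronglyMeasurable
        measurableSet_Ioc
    · exact ((SfunX_mono f).measurable).aestronglyMeasurable
    · exact (hdivcont.mono Set.Ioc_subset_Icc_self).aestronglyMeasurable measurableSet_Ioc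
  have hwint : IntegrableOn (fun t => g' t * (SfunX f t - d * t / Real.log t)) (Set.Ioc 2 x) :=
    Integrable.mono' hbint hwmeas ((ae_restrict_iff' measurableSet_Ioc).mpr (ae_of_all _ hbnd))
  have hIsplit : ∫ t in Set.Ioc 2 x, g' t * SfunX f t =
      (∫ t in Set.Ioc 2 x, g' t * (d * t / Real.log t)) +
        ∫ t in Set.Ioc 2 x, g' t * (SfunX f t - d * t / Real.log t) := by
    rw [← integral_add hvint hwint]
    exact integral_congr_ae (ae_of_all _ fun t => by ring)
  have hJ : d * ∫ t in (2:ℝ)..x, t * g' t / Real.log t =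
      ∫ t in Set.Ioc 2 x, g' t * (d * t / Real.log t) := by
    rw [intervalIntegral.integral_of_le hx, ← integral_const_mul]
    exact integral_congr_ae (ae_of_all _ fun t => by ring)
  have hJ2 : ∫ t in (2:ℝ)..x, t * |g' t| / Real.log t ^ 2 =
      ∫ t in Set.Ioc 2 x, t * |g' t| / Real.log t ^ 2 := intervalIntegral.integral_of_le hx
  have hfinal : primeSumIn f g x - d * x * g x / Real.log x +
      d * ∫ t in (2:ℝ)..x, t * g' t / Real.log t =
      g x * (SfunX f x - d * x / Real.log x) -
        ∫ t in Set.Ioc 2 x, g' t * (SfunX f t - d * t / Real.log t) := by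
    rw [hmain, hIsplit, hJ]; ring
  rw [hfinal, hJ2]
  have hb1 : |g x * (SfunX f x - d * x / Real.log x)| ≤ C₀ * (x * |g x| / Real.log x ^ 2) := by
    rw [abs_mul, SfunX_key f x hx0]
    calc |g x| * |(primeCountIn f x : ℝ) - d * x / Real.log x|
        ≤ |g x| * (C₀ * x / Real.log x ^ 2) := mul_le_mul_of_nonneg_left (hpi x hx) (abs_nonneg _)
      _ = C₀ * (x * |g x| / Real.log x ^ 2) := by ring
  have hb2 : ‖∫ t in Set.Ioc 2 x, g' t * (SfunX f t - d * t / Real.log t)‖ ≤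
      C₀ * ∫ t in Set.Ioc 2 x, t * |g' t| / Real.log t ^ 2 := by
    have h := norm_integral_le_of_norm_le hbint ((ae_restrict_iff' measurableSet_Ioc).mpr
      (ae_of_all _ hbnd))
    rwa [integral_const_mul] at h
  calc |g x * (SfunX f x - d * x / Real.log x) -
        ∫ t in Set.Ioc 2 x, g' t * (SfunX f t - d * t / Real.log t)|
      ≤ |g x * (SfunX f x - d * x / Real.log x)| +
        |∫ t in Set.Ioc 2 x, g' t * (SfunX f t - d * t / Real.log t)| := abs_sub _ _
    _ ≤ C₀ * (x * |g x| / Real.log x ^ 2) +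
        C₀ * ∫ t in Set.Ioc 2 x, t * |g' t| / Real.log t ^ 2 := add_le_add hb1 hb2
    _ = C₀ * (x * |g x| / Real.log x ^ 2 +
        ∫ t in Set.Ioc 2 x, t * |g' t| / Real.log t ^ 2) := by ring
end

section
/- Let f be a set of natural numbers and d > 0 a real constant, and suppose there is a constant C₀ > 0 such that |π_f(x) − d·x/ln x| ≤ C₀·x/ln²x for all x ≥ 2. Then there is a constant C > 0 such that for all x ≥ 2: |∑_{p prime, p ≤ x, p ∈ f} ln p − d·x| ≤ C·x/ln x. -/
open Filter

lemma aux_log_le_two_sqrt {x : ℝ} (hx : 0 ≤ x) : Real.log x ≤ 2 * Real.sqrt x := by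
  rcases eq_or_lt_of_le hx with h | h
  · simp [← h]
  have h1 : Real.log (Real.sqrt x) ≤ Real.sqrt x - 1 :=
    Real.log_le_sub_one_of_pos (Real.sqrt_pos.mpr h)
  have h2 : Real.log (Real.sqrt x) = Real.log x / 2 := Real.log_sqrt hx
  nlinarith [Real.sqrt_nonneg x]

lemma aux_log_le_half {x : ℝ} (hx : 0 < x) : Real.log x ≤ x / 2 := by
  have h1 : Real.log (Real.sqrt x) ≤ Real.sqrt x - 1 :=
    Real.log_le_sub_one_of_pos (Real.sqrt_pos.mpr hx)
  have h2 : Real.log (Real.sqrt x) = Real.log x / 2 := Real.log_sqrt hx.le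
  have h3 : Real.sqrt x ^ 2 = x := Real.sq_sqrt hx.le
  nlinarith [sq_nonneg (Real.sqrt x - 2), Real.sqrt_nonneg x]

open scoped Classical in
lemma aux_count (f : Set ℕ) {t : ℝ} (ht : 0 ≤ t) :
    primeCountIn f t
      = ((Finset.range (⌊t⌋₊ + 1)).filter (fun p => p.Prime ∧ p ∈ f)).card := by
  rw [primeCountIn, ← Set.ncard_coe_finset]
  congr 1
  ext p
  simp only [Finset.coe_filter, Finset.mem_range, Set.mem_setOf_eq, Nat.lt_succ_iff,
    Nat.le_floor_iff ht]
  tauto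

open scoped Classical in
lemma aux_sum_inv_log (x : ℝ) (hx : 2 ≤ x) (N : ℕ) (hN : (N : ℝ) ≤ x) :
    ∑ n ∈ Finset.Icc 2 N, 1 / Real.log n ≤ (2 / Real.log 2 + 2) * (x / Real.log x) := by
  have hx0 : (0:ℝ) < x := by linarith
  have hlx : 0 < Real.log x := Real.log_pos (by linarith)
  have hl2 : 0 < Real.log 2 := Real.log_pos one_lt_two
  set s := Real.sqrt x with hs
  have hs0 : 0 < s := Real.sqrt_pos.mpr hx0
  have hs2 : s ^ 2 = x := Real.sq_sqrt hx0.le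
  have key : ∀ n ∈ Finset.Icc 2 N, 1 / Real.log n ≤
      (if (n : ℝ) ≤ s then 1 / Real.log 2 else 0) + 2 / Real.log x := by
    intro n hn
    simp only [Finset.mem_Icc] at hn
    have hn2 : (2:ℝ) ≤ (n:ℝ) := by exact_mod_cast hn.1
    have hln : 0 < Real.log n := Real.log_pos (by linarith)
    by_cases h : (n : ℝ) ≤ s
    · simp only [h, if_true]
      have : Real.log 2 ≤ Real.log n := Real.log_le_log (by norm_num) hn2
      have h1 : 1 / Real.log n ≤ 1 / Real.log 2 := one_div_le_one_div_of_le hl2 this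
      have h2 : 0 ≤ 2 / Real.log x := by positivity
      linarith
    · simp only [h, if_false, zero_add]
      push_neg at h
      have hsl : Real.log s = Real.log x / 2 := Real.log_sqrt hx0.le
      have : Real.log x / 2 ≤ Real.log n := by
        rw [← hsl]; exact Real.log_le_log hs0 h.le
      rw [div_le_div_iff₀ hln hlx]
      linarith
  have hfil : (∑ n ∈ Finset.Icc 2 N, if (n : ℝ) ≤ s then 1 / Real.log 2 else 0)
      ≤ s / Real.log 2 := by
    have heq : (∑ n ∈ Finset.Icc 2 N, if (n : ℝ) ≤ s then 1 / Real.log 2 else 0)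
        = ∑ n ∈ (Finset.Icc 2 N).filter (fun (n : ℕ) => (n : ℝ) ≤ s), (1 / Real.log 2) :=
      (Finset.sum_filter _ _).symm
    rw [heq, Finset.sum_const, nsmul_eq_mul]
    have hsub : (Finset.Icc 2 N).filter (fun (n : ℕ) => (n : ℝ) ≤ s) ⊆ Finset.Icc 2 ⌊s⌋₊ := by
      intro n hn
      simp only [Finset.mem_filter, Finset.mem_Icc] at hn ⊢
      exact ⟨hn.1.1, Nat.le_floor hn.2⟩
    have hcard : (((Finset.Icc 2 N).filter (fun (n : ℕ) => (n : ℝ) ≤ s)).card : ℝ) ≤ s := by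
      have h1 := Finset.card_le_card hsub
      have h2 : (Finset.Icc 2 ⌊s⌋₊).card ≤ ⌊s⌋₊ := by
        rw [Nat.card_Icc]; omega
      have h3 : (⌊s⌋₊ : ℝ) ≤ s := Nat.floor_le hs0.le
      calc (((Finset.Icc 2 N).filter (fun (n : ℕ) => (n : ℝ) ≤ s)).card : ℝ)
          ≤ (⌊s⌋₊ : ℝ) := by exact_mod_cast le_trans h1 h2
        _ ≤ s := h3
    calc (((Finset.Icc 2 N).filter (fun (n : ℕ) => (n : ℝ) ≤ s)).card : ℝ) * (1 / Real.log 2)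
        ≤ s * (1 / Real.log 2) := by
          apply mul_le_mul_of_nonneg_right hcard (by positivity)
      _ = s / Real.log 2 := by ring
  have hcardN : ((Finset.Icc 2 N).card : ℝ) ≤ x := by
    have : (Finset.Icc 2 N).card ≤ N := by rw [Nat.card_Icc]; omega
    calc ((Finset.Icc 2 N).card : ℝ) ≤ (N : ℝ) := by exact_mod_cast this
      _ ≤ x := hN
  have hsle : s ≤ 2 * x / Real.log x := by
    rw [le_div_iff₀ hlx]
    have := aux_log_le_two_sqrt hx0.le
    nlinarith
  calc ∑ n ∈ Finset.Icc 2 N, 1 / Real.log n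
      ≤ ∑ n ∈ Finset.Icc 2 N, ((if (n : ℝ) ≤ s then 1 / Real.log 2 else 0) + 2 / Real.log x) :=
        Finset.sum_le_sum key
    _ = ∑ n ∈ Finset.Icc 2 N, (if (n : ℝ) ≤ s then 1 / Real.log 2 else 0)
        + (Finset.Icc 2 N).card * (2 / Real.log x) := by
        rw [Finset.sum_add_distrib, Finset.sum_const, nsmul_eq_mul]
    _ ≤ s / Real.log 2 + x * (2 / Real.log x) := by
        gcongr
    _ ≤ (2 / Real.log 2 + 2) * (x / Real.log x) := by
        have h1 : s / Real.log 2 ≤ (2 * x / Real.log x) / Real.log 2 := by gcongr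
        have h2 : (2 * x / Real.log x) / Real.log 2 = (2 / Real.log 2) * (x / Real.log x) := by
          field_simp
        have h3 : x * (2 / Real.log x) = 2 * (x / Real.log x) := by ring
        have h4 : (2 / Real.log 2 + 2) * (x / Real.log x)
            = (2 / Real.log 2) * (x / Real.log x) + 2 * (x / Real.log x) := by ring
        linarith

open scoped Classical in
lemma aux_abel (f : Set ℕ) (N : ℕ) :
    ∑ p ∈ (Finset.range (N + 1)).filter (fun p => p.Prime ∧ p ∈ f), Real.log p
      = (((Finset.range (N + 1)).filter (fun p => p.Prime ∧ p ∈ f)).card : ℝ) * Real.log N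
        - ∑ n ∈ Finset.range N,
            ((((Finset.range (n + 1)).filter (fun p => p.Prime ∧ p ∈ f)).card : ℝ)
              * (Real.log ((n : ℝ) + 1) - Real.log (n : ℝ))) := by
  set P := (Finset.range (N + 1)).filter (fun p => p.Prime ∧ p ∈ f) with hP
  have hlog : ∀ p ∈ P, Real.log p
      = Real.log N - ∑ n ∈ Finset.Ico p N, (Real.log ((n : ℝ) + 1) - Real.log (n : ℝ)) := by
    intro p hp
    rw [hP, Finset.mem_filter, Finset.mem_range] at hp
    have hpN : p ≤ N := by omega
    have htel : ∑ n ∈ Finset.Ico p N, (Real.log ((n : ℝ) + 1) - Real.log (n : ℝ))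
        = Real.log N - Real.log p := by
      have hcast : ∀ n : ℕ, Real.log ((n : ℝ) + 1) - Real.log (n : ℝ)
          = (fun m : ℕ => Real.log m) (n + 1) - (fun m : ℕ => Real.log m) n := by
        intro n; push_cast; ring_nf
      simp_rw [hcast]
      rw [Finset.sum_Ico_eq_sub _ hpN, Finset.sum_range_sub (fun m : ℕ => Real.log m),
        Finset.sum_range_sub (fun m : ℕ => Real.log m)]
      ring
    rw [htel]; ring
  have hswap : ∑ p ∈ P, ∑ n ∈ Finset.Ico p N, (Real.log ((n : ℝ) + 1) - Real.log (n : ℝ))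
      = ∑ n ∈ Finset.range N,
          ((((Finset.range (n + 1)).filter (fun p => p.Prime ∧ p ∈ f)).card : ℝ)
            * (Real.log ((n : ℝ) + 1) - Real.log (n : ℝ))) := by
    have h1 : ∀ p ∈ P, ∑ n ∈ Finset.Ico p N, (Real.log ((n : ℝ) + 1) - Real.log (n : ℝ))
        = ∑ n ∈ Finset.range N,
            if p ≤ n then Real.log ((n : ℝ) + 1) - Real.log (n : ℝ) else 0 := by
      intro p hp
      have : Finset.Ico p N = (Finset.range N).filter (fun n => p ≤ n) := by
        ext m; simp [Finset.mem_Ico, Finset.mem_filter, Finset.mem_range]; omega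
      rw [this, Finset.sum_filter]
    rw [Finset.sum_congr rfl h1, Finset.sum_comm]
    apply Finset.sum_congr rfl
    intro n hn
    rw [Finset.mem_range] at hn
    have h2 : (∑ p ∈ P, if p ≤ n then Real.log ((n : ℝ) + 1) - Real.log (n : ℝ) else 0)
        = ∑ p ∈ P.filter (fun p => p ≤ n), (Real.log ((n : ℝ) + 1) - Real.log (n : ℝ)) :=
      (Finset.sum_filter _ _).symm
    rw [h2, Finset.sum_const, nsmul_eq_mul]
    congr 2
    rw [hP, Finset.filter_filter]
    have h3 : (Finset.range (N + 1)).filter (fun p => (p.Prime ∧ p ∈ f) ∧ p ≤ n)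
        = (Finset.range (n + 1)).filter (fun p => p.Prime ∧ p ∈ f) := by
      ext q
      simp only [Finset.mem_filter, Finset.mem_range]
      constructor
      · rintro ⟨hq, hq2, hq3⟩; exact ⟨by omega, hq2⟩
      · rintro ⟨hq, hq2⟩; exact ⟨by omega, hq2, by omega⟩
    rw [h3]
  calc ∑ p ∈ P, Real.log p
      = ∑ p ∈ P, (Real.log N
          - ∑ n ∈ Finset.Ico p N, (Real.log ((n : ℝ) + 1) - Real.log (n : ℝ))) :=
        Finset.sum_congr rfl hlog
    _ = (P.card : ℝ) * Real.log N
        - ∑ p ∈ P, ∑ n ∈ Finset.Ico p N, (Real.log ((n : ℝ) + 1) - Real.log (n : ℝ)) := by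
        rw [Finset.sum_sub_distrib, Finset.sum_const, nsmul_eq_mul]
    _ = _ := by rw [hswap]

set_option maxHeartbeats 1000000 in
theorem stmt5 (f : Set ℕ) (d : ℝ) (hd : 0 < d) (C₀ : ℝ) (hC₀ : 0 < C₀)
    (hpi : ∀ x : ℝ, 2 ≤ x →
      |(primeCountIn f x : ℝ) - d * x / Real.log x| ≤ C₀ * x / (Real.log x) ^ 2) :
    ∃ C : ℝ, 0 < C ∧ ∀ x : ℝ, 2 ≤ x →
      |primeSumIn f Real.log x - d * x| ≤ C * x / Real.log x := by
  classical
  have hl2 : 0 < Real.log 2 := Real.log_pos one_lt_two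
  obtain ⟨K, hK⟩ : ∃ K : ℝ, K = d / Real.log 2 + C₀ / (Real.log 2) ^ 2 := ⟨_, rfl⟩
  obtain ⟨B₂, hB₂⟩ : ∃ B : ℝ, B = d + C₀ / Real.log 2 := ⟨_, rfl⟩
  obtain ⟨B₁, hB₁⟩ : ∃ B : ℝ, B = 2 / Real.log 2 + 2 := ⟨_, rfl⟩
  have hK0 : 0 < K := by rw [hK]; positivity
  have hB₂0 : 0 < B₂ := by rw [hB₂]; positivity
  have hB₁0 : 0 < B₁ := by rw [hB₁]; positivity
  refine ⟨C₀ + K + B₂ * B₁, by positivity, ?_⟩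
  intro x hx
  have hx0 : (0:ℝ) < x := by linarith
  have hlx : 0 < Real.log x := Real.log_pos (by linarith)
  have hl2x : Real.log 2 ≤ Real.log x := Real.log_le_log (by norm_num) hx
  set N : ℕ := ⌊x⌋₊ with hN
  have hN2 : 2 ≤ N := Nat.le_floor (by exact_mod_cast hx)
  have hNx : (N : ℝ) ≤ x := Nat.floor_le hx0.le
  have hxN1 : x < (N : ℝ) + 1 := Nat.lt_floor_add_one x
  have hN2R : (2:ℝ) ≤ (N:ℝ) := by exact_mod_cast hN2
  have hlN : 0 < Real.log N := Real.log_pos (by linarith)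
  have hlNx : Real.log N ≤ Real.log x := Real.log_le_log (by linarith) hNx
  set P := (Finset.range (N + 1)).filter (fun p => p.Prime ∧ p ∈ f) with hP
  -- π = P.card
  have hπ : (primeCountIn f x : ℝ) = (P.card : ℝ) := by
    rw [aux_count f hx0.le]
  -- the sum identity
  have hsum : primeSumIn f Real.log x = (P.card : ℝ) * Real.log N
      - ∑ n ∈ Finset.range N,
          ((((Finset.range (n + 1)).filter (fun p => p.Prime ∧ p ∈ f)).card : ℝ)
            * (Real.log ((n : ℝ) + 1) - Real.log (n : ℝ))) := by
    rw [primeSumIn]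
    exact aux_abel f N
  set S : ℝ := ∑ n ∈ Finset.range N,
      ((((Finset.range (n + 1)).filter (fun p => p.Prime ∧ p ∈ f)).card : ℝ)
        * (Real.log ((n : ℝ) + 1) - Real.log (n : ℝ))) with hS
  -- bound on head term
  have hpix := hpi x hx
  have habs := abs_le.mp hpix
  have hA1 : |(P.card : ℝ) * Real.log x - d * x| ≤ C₀ * x / Real.log x := by
    have heq : (P.card : ℝ) * Real.log x - d * x
        = ((primeCountIn f x : ℝ) - d * x / Real.log x) * Real.log x := by
      rw [hπ]; field_simp
    rw [heq, abs_mul, abs_of_pos hlx]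
    calc |(primeCountIn f x : ℝ) - d * x / Real.log x| * Real.log x
        ≤ (C₀ * x / (Real.log x) ^ 2) * Real.log x := by
          apply mul_le_mul_of_nonneg_right hpix hlx.le
      _ = C₀ * x / Real.log x := by field_simp
  have hπle : (P.card : ℝ) ≤ K * x := by
    have h1 : (primeCountIn f x : ℝ) ≤ d * x / Real.log x + C₀ * x / (Real.log x) ^ 2 := by
      linarith [habs.2]
    have h2 : d * x / Real.log x ≤ d * x / Real.log 2 := by gcongr
    have h3 : C₀ * x / (Real.log x) ^ 2 ≤ C₀ * x / (Real.log 2) ^ 2 := by gcongr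
    rw [← hπ]
    have : K * x = d * x / Real.log 2 + C₀ * x / (Real.log 2) ^ 2 := by rw [hK]; ring
    linarith
  have hA2 : (P.card : ℝ) * (Real.log x - Real.log N) ≤ K * (x / Real.log x) := by
    have hdiff : Real.log x - Real.log N ≤ 2 / x := by
      have h1 : Real.log x - Real.log N = Real.log (x / N) := by
        rw [Real.log_div (by linarith) (by linarith)]
      have h2 : Real.log (x / (N:ℝ)) ≤ x / N - 1 :=
        Real.log_le_sub_one_of_pos (by positivity)
      have h3 : x / (N:ℝ) - 1 ≤ 2 / x := by
        rw [div_sub_one (by linarith), div_le_div_iff₀ (by linarith) hx0]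
        nlinarith
      linarith
    have hc0 : (0:ℝ) ≤ (P.card : ℝ) := by positivity
    have hd0 : 0 ≤ Real.log x - Real.log N := by linarith
    have h4 : (P.card : ℝ) * (Real.log x - Real.log N) ≤ (K * x) * (2 / x) :=
      mul_le_mul hπle hdiff hd0 (by positivity)
    have h5 : (K * x) * (2 / x) = 2 * K := by field_simp
    have h6 : 2 * K ≤ K * (x / Real.log x) := by
      have hx2 : 2 ≤ x / Real.log x := by
        rw [le_div_iff₀ hlx]
        have := aux_log_le_half hx0
        linarith
      have := mul_le_mul_of_nonneg_left hx2 hK0.le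
      linarith
    linarith
  have hA : |(P.card : ℝ) * Real.log N - d * x| ≤ (C₀ + K) * (x / Real.log x) := by
    have : (P.card : ℝ) * Real.log N - d * x
        = ((P.card : ℝ) * Real.log x - d * x) - (P.card : ℝ) * (Real.log x - Real.log N) := by
      ring
    rw [this]
    have habs2 := abs_le.mp hA1
    rw [abs_le]
    constructor
    · have : C₀ * x / Real.log x = C₀ * (x / Real.log x) := by ring
      nlinarith [hA2, habs2.1, mul_nonneg (Nat.cast_nonneg P.card : (0:ℝ) ≤ (P.card:ℝ)) (sub_nonneg.mpr hlNx)]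
    · have h7 : C₀ * x / Real.log x = C₀ * (x / Real.log x) := by ring
      have h8 : 0 ≤ (P.card : ℝ) * (Real.log x - Real.log N) :=
        mul_nonneg (by positivity) (by linarith)
      nlinarith [habs2.2]
  -- bound on S
  have hSnonneg : 0 ≤ S := by
    apply Finset.sum_nonneg
    intro n _
    apply mul_nonneg (by positivity)
    rcases Nat.eq_zero_or_pos n with h | h
    · simp [h]
    · have : (0:ℝ) < (n:ℝ) := by exact_mod_cast h
      have := Real.log_le_log this (by linarith : (n:ℝ) ≤ (n:ℝ) + 1)
      linarith
  have hSle : S ≤ B₂ * (B₁ * (x / Real.log x)) := by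
    have hterm : ∀ n ∈ Finset.range N,
        ((((Finset.range (n + 1)).filter (fun p => p.Prime ∧ p ∈ f)).card : ℝ)
          * (Real.log ((n : ℝ) + 1) - Real.log (n : ℝ)))
        ≤ B₂ * (if 2 ≤ n then 1 / Real.log n else 0) := by
      intro n _
      by_cases h2n : 2 ≤ n
      · simp only [h2n, if_true]
        have hn2R : (2:ℝ) ≤ (n:ℝ) := by exact_mod_cast h2n
        have hn0 : (0:ℝ) < (n:ℝ) := by linarith
        have hln : 0 < Real.log n := Real.log_pos (by linarith)
        have hl2n : Real.log 2 ≤ Real.log n := Real.log_le_log (by norm_num) hn2R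
        have hcount : ((((Finset.range (n + 1)).filter (fun p => p.Prime ∧ p ∈ f)).card : ℝ))
            ≤ d * n / Real.log n + C₀ * n / (Real.log n) ^ 2 := by
          have h := abs_le.mp (hpi (n:ℝ) hn2R)
          have heq : primeCountIn f (n:ℝ)
              = ((Finset.range (n + 1)).filter (fun p => p.Prime ∧ p ∈ f)).card := by
            have := aux_count f (t := (n:ℝ)) (by positivity)
            rwa [Nat.floor_natCast] at this
          rw [heq] at h
          linarith [h.2]
        have hdel : Real.log ((n : ℝ) + 1) - Real.log (n : ℝ) ≤ 1 / n := by
          have h1 : Real.log (((n:ℝ) + 1) / n) ≤ ((n:ℝ) + 1) / n - 1 :=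
            Real.log_le_sub_one_of_pos (by positivity)
          rw [Real.log_div (by linarith) (by linarith)] at h1
          have h2 : ((n:ℝ) + 1) / n - 1 = 1 / n := by field_simp; ring
          linarith
        have hdel0 : 0 ≤ Real.log ((n : ℝ) + 1) - Real.log (n : ℝ) := by
          have := Real.log_le_log hn0 (by linarith : (n:ℝ) ≤ (n:ℝ) + 1)
          linarith
        have hmul : ((((Finset.range (n + 1)).filter (fun p => p.Prime ∧ p ∈ f)).card : ℝ))
            * (Real.log ((n : ℝ) + 1) - Real.log (n : ℝ))
            ≤ (d * n / Real.log n + C₀ * n / (Real.log n) ^ 2) * (1 / n) :=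
          mul_le_mul hcount hdel hdel0 (by positivity)
        have heq2 : (d * n / Real.log n + C₀ * n / (Real.log n) ^ 2) * (1 / n)
            = d / Real.log n + C₀ / (Real.log n) ^ 2 := by
          field_simp
        have hfin : d / Real.log n + C₀ / (Real.log n) ^ 2 ≤ B₂ * (1 / Real.log n) := by
          have e1 : C₀ / (Real.log n) ^ 2 ≤ C₀ / (Real.log 2 * Real.log n) := by
            gcongr
            nlinarith
          have e2 : B₂ * (1 / Real.log n) = d / Real.log n + C₀ / (Real.log 2 * Real.log n) := by
            rw [hB₂]; field_simp
          rw [e2]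
          linarith
        calc _ ≤ (d * n / Real.log n + C₀ * n / (Real.log n) ^ 2) * (1 / n) := hmul
          _ = d / Real.log n + C₀ / (Real.log n) ^ 2 := heq2
          _ ≤ B₂ * (1 / Real.log n) := hfin
      · simp only [h2n, if_false, mul_zero]
        have hempty : ((Finset.range (n + 1)).filter (fun p => p.Prime ∧ p ∈ f)) = ∅ := by
          apply Finset.filter_eq_empty_iff.mpr
          intro q hq
          rw [Finset.mem_range] at hq
          intro hcon
          have := hcon.1.two_le
          omega
        rw [hempty]
        simp
    have hstep : S ≤ ∑ n ∈ Finset.range N, B₂ * (if 2 ≤ n then 1 / Real.log n else 0) :=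
      Finset.sum_le_sum hterm
    have hstep2 : ∑ n ∈ Finset.range N, B₂ * (if 2 ≤ n then 1 / Real.log n else 0)
        = B₂ * ∑ n ∈ Finset.range N, (if 2 ≤ n then 1 / Real.log n else 0) := by
      rw [Finset.mul_sum]
    have hstep3 : ∑ n ∈ Finset.range N, (if 2 ≤ n then 1 / Real.log n else 0)
        ≤ ∑ n ∈ Finset.Icc 2 N, 1 / Real.log n := by
      have h1 : (∑ n ∈ Finset.range N, if 2 ≤ n then 1 / Real.log n else 0)
          = ∑ n ∈ (Finset.range N).filter (fun n => 2 ≤ n), 1 / Real.log n :=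
        (Finset.sum_filter _ _).symm
      rw [h1]
      apply Finset.sum_le_sum_of_subset_of_nonneg
      · intro m hm
        simp only [Finset.mem_filter, Finset.mem_range, Finset.mem_Icc] at hm ⊢
        omega
      · intro m hm _
        simp only [Finset.mem_Icc] at hm
        have : (0:ℝ) < Real.log m := Real.log_pos (by
          have : (2:ℝ) ≤ (m:ℝ) := by exact_mod_cast hm.1
          linarith)
        positivity
    have hstep4 := aux_sum_inv_log x hx N hNx
    calc S ≤ B₂ * ∑ n ∈ Finset.range N, (if 2 ≤ n then 1 / Real.log n else 0) := by
          rw [← hstep2]; exact hstep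
      _ ≤ B₂ * ∑ n ∈ Finset.Icc 2 N, 1 / Real.log n := by gcongr
      _ ≤ B₂ * ((2 / Real.log 2 + 2) * (x / Real.log x)) := by gcongr
      _ = B₂ * (B₁ * (x / Real.log x)) := by rw [hB₁]
  -- conclude
  rw [hsum]
  have hgoal : |(P.card : ℝ) * Real.log N - S - d * x|
      ≤ (C₀ + K) * (x / Real.log x) + B₂ * (B₁ * (x / Real.log x)) := by
    have h1 : (P.card : ℝ) * Real.log N - S - d * x
        = ((P.card : ℝ) * Real.log N - d * x) - S := by ring
    rw [h1]
    calc |((P.card : ℝ) * Real.log N - d * x) - S|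
        ≤ |(P.card : ℝ) * Real.log N - d * x| + |S| := abs_sub _ _
      _ ≤ (C₀ + K) * (x / Real.log x) + B₂ * (B₁ * (x / Real.log x)) := by
          rw [abs_of_nonneg hSnonneg]
          exact add_le_add hA hSle
  calc |(P.card : ℝ) * Real.log N - S - d * x|
      ≤ (C₀ + K) * (x / Real.log x) + B₂ * (B₁ * (x / Real.log x)) := hgoal
    _ = (C₀ + K + B₂ * B₁) * x / Real.log x := by ring
end

section
/- Let f be a set of natural numbers and d > 0 a real constant, and suppose there is a constant C₀ > 0 such that |π_f(x) − d·x/ln x| ≤ C₀·x/ln²x for all x ≥ 2. Then there is a constant C > 0 such that for all x ≥ 3: |∑_{p prime, p ≤ x, p ∈ f} 1/p − d·ln ln x| ≤ C. -/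
open Filter

open Finset

open Finset

lemma log_diff_le {a u : ℝ} (ha : 0 < a) (hu : 0 ≤ u) :
    Real.log (a + u) - Real.log a ≤ u / a := by
  rw [← Real.log_div (by linarith) (ne_of_gt ha)]
  have h := Real.log_le_sub_one_of_pos (show 0 < (a+u)/a by positivity)
  have : (a + u) / a - 1 = u / a := by field_simp; ring
  linarith

lemma log_diff_ge {a u : ℝ} (ha : 0 < a) (hu : 0 ≤ u) :
    u / (a + u) ≤ Real.log (a + u) - Real.log a := by
  have hau : 0 < a + u := by linarith
  have h := Real.log_le_sub_one_of_pos (show 0 < a/(a+u) by positivity)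
  rw [Real.log_div (ne_of_gt ha) (ne_of_gt hau)] at h
  have : a / (a + u) - 1 = -(u / (a+u)) := by field_simp; ring
  linarith

-- u := log(n+1) - log n bounds, real version
lemma log_succ_le {t : ℝ} (ht : 0 < t) : Real.log (t + 1) - Real.log t ≤ 1 / t := by
  have := log_diff_le ht (le_of_lt one_pos)
  simpa using this

lemma log_succ_ge {t : ℝ} (ht : 0 < t) : 1 / (t + 1) ≤ Real.log (t + 1) - Real.log t := by
  have := log_diff_ge ht (le_of_lt one_pos)
  simpa using this

lemma one_le_log_three : (1:ℝ) ≤ Real.log 3 := by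
  rw [Real.le_log_iff_exp_le (by norm_num)]
  calc Real.exp 1 ≤ 2.7182818286 := (Real.exp_one_lt_d9).le
  _ ≤ 3 := by norm_num

-- key1 : |1/((n+1)a) - Δ| ≤ 1/n², where Δ = log(a+u) - log a
lemma key1 {n a u : ℝ} (hn : 3 ≤ n) (ha : 1 ≤ a) (hu1 : 1/(n+1) ≤ u) (hu2 : u ≤ 1/n) :
    |1/((n+1)*a) - (Real.log (a+u) - Real.log a)| ≤ 1/n^2 := by
  have hn0 : (0:ℝ) < n := by linarith
  have hn1 : (0:ℝ) < n + 1 := by linarith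
  have ha0 : (0:ℝ) < a := by linarith
  have hu0 : 0 < u := lt_of_lt_of_le (by positivity) hu1
  have hau : (0:ℝ) < a + u := by linarith
  have hΔle : Real.log (a+u) - Real.log a ≤ u / a := log_diff_le ha0 hu0.le
  have hΔge : u / (a + u) ≤ Real.log (a+u) - Real.log a := log_diff_ge ha0 hu0.le
  set Δ := Real.log (a+u) - Real.log a with hΔ
  rw [abs_le]
  constructor
  · -- Δ ≤ 1/((n+1)a) + 1/n²
    rw [neg_le, neg_sub]
    have e1 : u/a - 1/((n+1)*a) = (u - 1/(n+1))/a := by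
      rw [sub_div, ← div_div, one_div (n+1)]
    have e2 : (u - 1/(n+1))/a ≤ u - 1/(n+1) :=
      div_le_self (by linarith) ha
    have e3 : u - 1/(n+1) ≤ 1/n - 1/(n+1) := by linarith
    have e4 : 1/n - 1/(n+1) ≤ 1/n^2 := by
      rw [div_sub_div _ _ (ne_of_gt hn0) (ne_of_gt hn1)]
      rw [div_le_div_iff₀ (by positivity) (by positivity)]
      ring_nf
      nlinarith
    linarith
  · -- 1/((n+1)a) - Δ ≤ 1/n²
    set u₀ : ℝ := 1/(n+1) with hu₀
    have hu₀0 : 0 < u₀ := by positivity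
    have hmono : u₀/(a+u₀) ≤ u/(a+u) := by
      rw [div_le_div_iff₀ (by linarith) hau]
      nlinarith
    have e1 : 1/((n+1)*a) = u₀/a := by rw [hu₀, ← div_div, one_div (n+1)]
    have e2 : u₀/a - u₀/(a+u₀) = u₀^2/(a*(a+u₀)) := by
      rw [div_sub_div _ _ (ne_of_gt ha0) (by positivity)]
      ring_nf
    have e3 : u₀^2/(a*(a+u₀)) ≤ u₀^2 := div_le_self (by positivity) (by nlinarith)
    have e4 : u₀^2 ≤ 1/n^2 := by
      rw [hu₀, div_pow, one_pow]
      apply div_le_div_of_nonneg_left (by norm_num) (by positivity)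
      nlinarith
    linarith

-- key2 : 1/(n a²) ≤ 4(1/a - 1/(a+u))
lemma key2 {n a u : ℝ} (hn : 3 ≤ n) (ha : 1 ≤ a) (hu1 : 1/(n+1) ≤ u) (hu2 : u ≤ 1/n) :
    1/(n*a^2) ≤ 4*(1/a - 1/(a+u)) := by
  have hn0 : (0:ℝ) < n := by linarith
  have ha0 : (0:ℝ) < a := by linarith
  have hu0 : 0 < u := lt_of_lt_of_le (by positivity) hu1
  have hau : (0:ℝ) < a + u := by linarith
  have e1 : 1/a - 1/(a+u) = u/(a*(a+u)) := by
    rw [div_sub_div _ _ (ne_of_gt ha0) (ne_of_gt hau)]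
    ring_nf
  rw [e1]
  have hu1' : 1 ≤ u * (n+1) := by
    rw [div_le_iff₀ (by linarith)] at hu1; linarith
  have hu2' : u * n ≤ 1 := by
    rw [le_div_iff₀ hn0] at hu2; linarith
  rw [div_le_iff₀ (by positivity)]
  rw [mul_comm 4 (u/(a*(a+u))), mul_assoc, div_mul_eq_mul_div, le_div_iff₀ (by positivity)]
  -- u * (4 * (n*a^2)) ≥ 1 * (a*(a+u))
  have hu3 : u ≤ 1 := by nlinarith
  nlinarith [mul_le_mul_of_nonneg_right hu1' (by positivity : (0:ℝ) ≤ a^2), sq_nonneg a, mul_pos ha0 hu0]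

lemma abel_id (a : ℕ → ℝ) (h0 : a 0 = 0) :
    ∀ N : ℕ, 1 ≤ N →
    ∑ n ∈ Finset.range (N+1), a n / n
      = (∑ n ∈ Finset.range (N+1), a n) / N
        + ∑ n ∈ Finset.Ico 1 N, (∑ k ∈ Finset.range (n+1), a k) * (1/n - 1/(n+1)) := by
  intro N hN
  induction N, hN using Nat.le_induction with
  | base => simp [Finset.sum_range_succ, h0]
  | succ N hN ih =>
    rw [Finset.sum_range_succ, ih, Finset.sum_Ico_succ_top (by omega)]
    have hN0 : ((N:ℝ)) ≠ 0 := by positivity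
    have hN1 : ((N:ℝ)+1) ≠ 0 := by positivity
    rw [Finset.sum_range_succ (f := a) (n := N+1)]
    push_cast
    field_simp
    ring

lemma tel_sum (g : ℕ → ℝ) {m N : ℕ} (h : m ≤ N) :
    ∑ n ∈ Finset.Ico m N, (g (n+1) - g n) = g N - g m := by
  rw [Finset.sum_Ico_eq_sub _ h, Finset.sum_range_sub, Finset.sum_range_sub]
  ring

lemma per_term {d C₀ : ℝ} (hd : 0 ≤ d) (hC₀ : 0 ≤ C₀) {An : ℝ} {n : ℕ} (hn : 3 ≤ n)
    (hAn : |An - d * n / Real.log n| ≤ C₀ * n / (Real.log n)^2) :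
    |An * (1/(n:ℝ) - 1/((n:ℝ)+1))
        - d * (Real.log (Real.log ((n:ℝ)+1)) - Real.log (Real.log n))|
      ≤ d * (1/(n:ℝ)^2) + 4*C₀*(1/Real.log (n:ℝ) - 1/Real.log ((n:ℝ)+1)) := by
  have hn' : (3:ℝ) ≤ (n:ℝ) := by exact_mod_cast hn
  have hn0 : (0:ℝ) < (n:ℝ) := by linarith
  have hn1 : (0:ℝ) < (n:ℝ)+1 := by linarith
  set nn : ℝ := (n:ℝ) with hnn
  set a : ℝ := Real.log nn with haa
  set u : ℝ := Real.log (nn+1) - Real.log nn with huu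
  have ha : 1 ≤ a := le_trans one_le_log_three (Real.log_le_log (by norm_num) hn')
  have ha0 : 0 < a := by linarith
  have hu1 : 1/(nn+1) ≤ u := log_succ_ge hn0
  have hu2 : u ≤ 1/nn := log_succ_le hn0
  have hu0 : 0 < u := lt_of_lt_of_le (by positivity) hu1
  have hau : a + u = Real.log (nn+1) := by rw [haa, huu]; ring
  have k1 := key1 hn' ha hu1 hu2
  have k2 := key2 hn' ha hu1 hu2
  rw [hau] at k1 k2
  set Δ : ℝ := Real.log (Real.log (nn+1)) - Real.log (Real.log nn) with hΔ
  have hΔ' : Δ = Real.log (a + u) - Real.log a := by rw [hΔ, hau, haa]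
  set w : ℝ := 1/nn - 1/(nn+1) with hw
  have hw' : w = 1/(nn*(nn+1)) := by rw [hw]; field_simp; ring
  have hw0 : 0 ≤ w := by rw [hw']; positivity
  have hid : (d*nn/a)*w = d * (1/((nn+1)*a)) := by
    rw [hw']; field_simp
  have decomp : An * w - d*Δ = (An - d*nn/a)*w + d*(1/((nn+1)*a) - Δ) := by
    rw [mul_sub d (1/((nn+1)*a)) Δ, ← hid]; ring
  have habs : |An * w - d*Δ| ≤ |An - d*nn/a| * w + d * |1/((nn+1)*a) - Δ| := by
    rw [decomp]
    refine le_trans (abs_add_le _ _) ?_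
    rw [abs_mul, abs_mul, abs_of_nonneg hw0, abs_of_nonneg hd]
  have hE : |An - d*nn/a| * w ≤ C₀ * (4*(1/a - 1/Real.log (nn+1))) := by
    have h1 : |An - d*nn/a| * w ≤ (C₀*nn/a^2) * (1/(nn*(nn+1))) := by
      rw [hw']
      have hnn : |An - d*nn/a| ≤ C₀*nn/a^2 := by
        have : An - d * nn / a = An - d * ↑n / Real.log ↑n := by rw [haa]
        rw [this]
        convert hAn using 2
      exact mul_le_mul hnn le_rfl (by positivity) (by positivity)
    have h2 : (C₀*nn/a^2) * (1/(nn*(nn+1))) = C₀/((nn+1)*a^2) := by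
      field_simp
    have h3 : C₀/((nn+1)*a^2) ≤ C₀/(nn*a^2) := by
      gcongr; linarith
    have h4 : C₀/(nn*a^2) = C₀ * (1/(nn*a^2)) := by ring
    calc |An - d*nn/a| * w ≤ (C₀*nn/a^2) * (1/(nn*(nn+1))) := h1
      _ = C₀/((nn+1)*a^2) := h2
      _ ≤ C₀/(nn*a^2) := h3
      _ = C₀ * (1/(nn*a^2)) := h4
      _ ≤ C₀ * (4*(1/a - 1/Real.log (nn+1))) := by
          exact mul_le_mul_of_nonneg_left k2 hC₀
  have hD : d * |1/((nn+1)*a) - Δ| ≤ d * (1/nn^2) := by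
    exact mul_le_mul_of_nonneg_left k1 hd
  have : |An * w - d*Δ| ≤ d*(1/nn^2) + C₀*(4*(1/a - 1/Real.log (nn+1))) := by
    linarith
  calc |An * w - d*Δ| ≤ d*(1/nn^2) + C₀*(4*(1/a - 1/Real.log (nn+1))) := this
    _ = d * (1/nn^2) + 4*C₀*(1/Real.log nn - 1/Real.log (nn+1)) := by rw [haa]; ring

open scoped Classical in
noncomputable def aa (f : Set ℕ) (k : ℕ) : ℝ := if k.Prime ∧ k ∈ f then 1 else 0

noncomputable def AA (f : Set ℕ) (m : ℕ) : ℝ := ∑ k ∈ Finset.range (m+1), aa f k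

noncomputable def LL (m : ℕ) : ℝ := Real.log (Real.log m)

lemma aa_nonneg (f : Set ℕ) (k : ℕ) : 0 ≤ aa f k := by
  rw [aa]; split_ifs <;> norm_num

lemma aa_le_one (f : Set ℕ) (k : ℕ) : aa f k ≤ 1 := by
  rw [aa]; split_ifs <;> norm_num

lemma aa0 (f : Set ℕ) : aa f 0 = 0 := by simp [aa, Nat.not_prime_zero]

lemma aa1 (f : Set ℕ) : aa f 1 = 0 := by simp [aa, Nat.not_prime_one]

lemma AA_nonneg (f : Set ℕ) (m : ℕ) : 0 ≤ AA f m :=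
  Finset.sum_nonneg fun k _ => aa_nonneg f k

lemma AA1 (f : Set ℕ) : AA f 1 = 0 := by
  rw [AA]
  simp [Finset.sum_range_succ, aa0, aa1]

lemma AA2 (f : Set ℕ) : AA f 2 ≤ 1 := by
  rw [AA]
  simp only [Finset.sum_range_succ, Finset.sum_range_zero, zero_add, aa0, aa1]
  simpa using aa_le_one f 2

open scoped Classical in
lemma count_eq' (f : Set ℕ) (N : ℕ) : (primeCountIn f N : ℝ) = AA f N := by
  have hset : {p : ℕ | p.Prime ∧ p ∈ f ∧ (p:ℝ) ≤ (N:ℝ)}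
      = ↑((Finset.range (N+1)).filter (fun p => p.Prime ∧ p ∈ f)) := by
    ext p
    simp only [Finset.coe_filter, Finset.mem_range, Set.mem_setOf_eq, Nat.lt_succ_iff,
      Nat.cast_le]
    tauto
  rw [primeCountIn, hset, Set.ncard_coe_finset, AA]
  simp only [aa]
  rw [Finset.sum_boole]

open scoped Classical in
lemma sum_eq' (f : Set ℕ) (x : ℝ) :
    primeSumIn f (fun t => 1/t) x = ∑ k ∈ Finset.range (⌊x⌋₊+1), aa f k / k := by
  rw [primeSumIn, Finset.sum_filter]
  refine Finset.sum_congr rfl fun k _ => ?_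
  rw [aa]
  split_ifs <;> simp

lemma inv_sq_le {t : ℝ} (ht : 2 ≤ t) : 1/t^2 ≤ 1/(t-1) - 1/t := by
  have h0 : (0:ℝ) < t := by linarith
  have h1 : (0:ℝ) < t - 1 := by linarith
  rw [div_sub_div _ _ (ne_of_gt h1) (ne_of_gt h0), div_le_div_iff₀ (by positivity) (by positivity)]
  nlinarith

set_option maxHeartbeats 1000000 in
lemma int_bound (f : Set ℕ) (d : ℝ) (hd : 0 < d) (C₀ : ℝ) (hC₀ : 0 < C₀)
    (hpi : ∀ x : ℝ, 2 ≤ x →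
      |(primeCountIn f x : ℝ) - d * x / Real.log x| ≤ C₀ * x / (Real.log x) ^ 2)
    (N : ℕ) (hN : 3 ≤ N) :
    |(∑ k ∈ Finset.range (N+1), aa f k / k) - d * LL N| ≤ 3*d + 5*C₀ + 1 := by
  have hA_err : ∀ m : ℕ, 2 ≤ m → |AA f m - d * m / Real.log m| ≤ C₀ * m / (Real.log m)^2 := by
    intro m hm
    have := hpi (m:ℝ) (by exact_mod_cast hm)
    rwa [count_eq'] at this
  have habel : ∑ n ∈ Finset.range (N+1), aa f n / n
      = AA f N / N + ∑ n ∈ Finset.Ico 1 N, AA f n * (1/(n:ℝ) - 1/((n:ℝ)+1)) :=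
    abel_id (aa f) (aa0 f) N (by omega)
  have hsplit : ∑ n ∈ Finset.Ico 1 N, AA f n * (1/(n:ℝ) - 1/((n:ℝ)+1))
      = AA f 1 * (1/(1:ℝ) - 1/(1+1)) + AA f 2 * (1/(2:ℝ) - 1/(2+1))
        + ∑ n ∈ Finset.Ico 3 N, AA f n * (1/(n:ℝ) - 1/((n:ℝ)+1)) := by
    rw [← Finset.sum_Ico_consecutive _ (by omega : 1 ≤ 3) hN]
    have h13 : Finset.Ico 1 3 = {1, 2} := rfl
    rw [h13, Finset.sum_insert (by decide), Finset.sum_singleton]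
    norm_num
  -- main sum over Ico 3 N
  have hmain : |(∑ n ∈ Finset.Ico 3 N, AA f n * (1/(n:ℝ) - 1/((n:ℝ)+1)))
      - d * (LL N - LL 3)| ≤ d/2 + 4*C₀ := by
    have htel : d * (LL N - LL 3)
        = ∑ n ∈ Finset.Ico 3 N, ((fun m => d * LL m) (n+1) - (fun m => d * LL m) n) := by
      rw [tel_sum (fun m => d * LL m) hN]; ring
    rw [htel, ← Finset.sum_sub_distrib]
    refine le_trans (Finset.abs_sum_le_sum_abs _ _) ?_
    set D : ℕ → ℝ := fun m => d * (-(1/((m:ℝ)-1))) + 4*C₀*(-(1/Real.log m)) with hD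
    have hterm : ∀ n ∈ Finset.Ico 3 N,
        |AA f n * (1/(n:ℝ) - 1/((n:ℝ)+1)) - ((fun m => d * LL m) (n+1) - (fun m => d * LL m) n)|
          ≤ D (n+1) - D n := by
      intro n hn
      have hn3 : 3 ≤ n := (Finset.mem_Ico.mp hn).1
      have hn3' : (3:ℝ) ≤ (n:ℝ) := by exact_mod_cast hn3
      have hpt := per_term hd.le hC₀.le hn3 (hA_err n (by omega))
      have hLLcast : ((fun m => d * LL m) (n+1) - (fun m => d * LL m) n)
          = d * (Real.log (Real.log ((n:ℝ)+1)) - Real.log (Real.log (n:ℝ))) := by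
        simp only [LL]
        push_cast
        ring
      rw [hLLcast]
      refine le_trans hpt ?_
      have hDcast : D (n+1) - D n
          = d * (1/((n:ℝ)-1) - 1/(n:ℝ)) + 4*C₀*(1/Real.log (n:ℝ) - 1/Real.log ((n:ℝ)+1)) := by
        simp only [hD]
        push_cast
        ring
      rw [hDcast]
      have h1 : 1/(n:ℝ)^2 ≤ 1/((n:ℝ)-1) - 1/(n:ℝ) := inv_sq_le (by linarith)
      have := mul_le_mul_of_nonneg_left h1 hd.le
      linarith
    refine le_trans (Finset.sum_le_sum hterm) ?_
    rw [tel_sum D hN]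
    have hN3' : (3:ℝ) ≤ (N:ℝ) := by exact_mod_cast hN
    have hlogN : 1 ≤ Real.log N := le_trans one_le_log_three (Real.log_le_log (by norm_num) hN3')
    have hlog3 : 1 ≤ Real.log ((3:ℕ):ℝ) := by norm_num [one_le_log_three]
    have hD3 : D 3 = -(d/2) - 4*C₀*(1/Real.log ((3:ℕ):ℝ)) := by
      simp only [hD]
      norm_num
      ring
    have hDN1 : d * (-(1/((N:ℝ)-1))) ≤ 0 := by
      have : (0:ℝ) < (N:ℝ)-1 := by linarith
      have : 0 ≤ 1/((N:ℝ)-1) := by positivity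
      nlinarith
    have hDN2 : 4*C₀*(-(1/Real.log (N:ℝ))) ≤ 0 := by
      have : 0 ≤ 1/Real.log (N:ℝ) := by positivity
      nlinarith
    have hDN : D N ≤ 0 := by rw [hD]; simpa using add_nonpos hDN1 hDN2
    have hl3 : 4*C₀*(1/Real.log ((3:ℕ):ℝ)) ≤ 4*C₀ := by
      have h := div_le_self (by positivity : (0:ℝ) ≤ 4*C₀) hlog3
      calc 4*C₀*(1/Real.log ((3:ℕ):ℝ)) = 4*C₀/Real.log ((3:ℕ):ℝ) := by ring
        _ ≤ 4*C₀ := h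
    rw [hD3]
    linarith
  -- |AA f N / N| bound
  have hN3' : (3:ℝ) ≤ (N:ℝ) := by exact_mod_cast hN
  have hN0 : (0:ℝ) < (N:ℝ) := by linarith
  have hlogN : 1 ≤ Real.log N := le_trans one_le_log_three (Real.log_le_log (by norm_num) hN3')
  have hAN : AA f N / N ≤ d + C₀ := by
    have h := (abs_le.mp (hA_err N (by omega))).2
    have h1 : d*(N:ℝ)/Real.log N ≤ d*N := div_le_self (by positivity) hlogN
    have h2 : C₀*(N:ℝ)/(Real.log N)^2 ≤ C₀*N := div_le_self (by positivity) (by nlinarith)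
    have h3 : AA f N ≤ (d + C₀)*N := by nlinarith
    rw [div_le_iff₀ hN0]
    linarith
  have hAN0 : 0 ≤ AA f N / N := div_nonneg (AA_nonneg f N) hN0.le
  -- LL 3 bounds
  have hlog3_2 : Real.log ((3:ℕ):ℝ) ≤ 2 := by
    push_cast
    have := Real.log_le_sub_one_of_pos (show (0:ℝ) < 3 by norm_num)
    linarith
  have hlog3_1 : 1 ≤ Real.log ((3:ℕ):ℝ) := by norm_num [one_le_log_three]
  have hLL3_0 : 0 ≤ LL 3 := Real.log_nonneg hlog3_1
  have hLL3_1 : LL 3 ≤ 1 := by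
    rw [LL]
    have h1 : Real.log (Real.log ((3:ℕ):ℝ)) ≤ Real.log 2 :=
      Real.log_le_log (by linarith) hlog3_2
    have h2 : Real.log 2 ≤ 1 := by
      have := Real.log_le_sub_one_of_pos (show (0:ℝ) < 2 by norm_num)
      linarith
    linarith
  -- assemble
  rw [habel, hsplit, AA1 f]
  have hA2a : 0 ≤ AA f 2 * (1/(2:ℝ) - 1/(2+1)) := by
    have := AA_nonneg f 2
    nlinarith
  have hA2b : AA f 2 * (1/(2:ℝ) - 1/(2+1)) ≤ 1 := by
    have := AA2 f
    have := AA_nonneg f 2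
    nlinarith
  have hm := abs_le.mp hmain
  have hdL3a : 0 ≤ d * LL 3 := by positivity
  have hdL3b : d * LL 3 ≤ d := by nlinarith
  rw [abs_le]
  constructor <;> nlinarith [hm.1, hm.2]


theorem stmt6 (f : Set ℕ) (d : ℝ) (hd : 0 < d) (C₀ : ℝ) (hC₀ : 0 < C₀)
    (hpi : ∀ x : ℝ, 2 ≤ x →
      |(primeCountIn f x : ℝ) - d * x / Real.log x| ≤ C₀ * x / (Real.log x) ^ 2) :
    ∃ C : ℝ, 0 < C ∧ ∀ x : ℝ, 3 ≤ x →
      |primeSumIn f (fun t => 1 / t) x - d * Real.log (Real.log x)| ≤ C := by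
  refine ⟨3*d + 5*C₀ + 1 + d, by linarith, ?_⟩
  intro x hx
  have hx0 : (0:ℝ) ≤ x := by linarith
  set N := ⌊x⌋₊ with hNdef
  have hN3 : 3 ≤ N := Nat.le_floor (by exact_mod_cast hx)
  have hbridge : primeSumIn f (fun t => 1 / t) x = ∑ k ∈ Finset.range (N+1), aa f k / k :=
    sum_eq' f x
  have hib := int_bound f d hd C₀ hC₀ hpi N hN3
  have hN3' : (3:ℝ) ≤ (N:ℝ) := by exact_mod_cast hN3
  have hN0 : (0:ℝ) < (N:ℝ) := by linarith
  have hxN : (N:ℝ) ≤ x := Nat.floor_le hx0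
  have hxN1 : x ≤ (N:ℝ) + 1 := (Nat.lt_floor_add_one x).le
  have hlogN : 1 ≤ Real.log N := le_trans one_le_log_three (Real.log_le_log (by norm_num) hN3')
  have hlogx : Real.log (N:ℝ) ≤ Real.log x := Real.log_le_log hN0 hxN
  -- u := log x - log N ∈ [0, 1]
  have hu2 : Real.log x - Real.log N ≤ 1 := by
    have h1 : Real.log x ≤ Real.log ((N:ℝ)+1) := Real.log_le_log (by linarith) hxN1
    have h2 : Real.log ((N:ℝ)+1) - Real.log N ≤ 1/(N:ℝ) := log_succ_le hN0
    have h3 : 1/(N:ℝ) ≤ 1 := by rw [div_le_one hN0]; linarith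
    linarith
  have hLLd : 0 ≤ Real.log (Real.log x) - LL N ∧ Real.log (Real.log x) - LL N ≤ 1 := by
    constructor
    · have := Real.log_le_log (by linarith : (0:ℝ) < Real.log N) hlogx
      rw [LL]; linarith
    · have hdle := log_diff_le (show (0:ℝ) < Real.log N by linarith)
        (show 0 ≤ Real.log x - Real.log N by linarith)
      have hau : Real.log (N:ℝ) + (Real.log x - Real.log N) = Real.log x := by ring
      rw [hau] at hdle
      have : (Real.log x - Real.log N)/Real.log N ≤ Real.log x - Real.log N :=
        div_le_self (by linarith) hlogN
      rw [LL]; linarith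
  have hm := abs_le.mp hib
  have hd1 : 0 ≤ d * (Real.log (Real.log x) - LL N) := mul_nonneg hd.le hLLd.1
  have hd2 : d * (Real.log (Real.log x) - LL N) ≤ d := by nlinarith [hLLd.2]
  rw [hbridge, abs_le]
  constructor <;> nlinarith [hm.1, hm.2]
end

section
/- Let f be a set of natural numbers, d ≠ 0 a real constant, c > 0, and suppose there is a constant C₀ > 0 such that |π_f(x) − d·∫_2^x dt/ln t| ≤ C₀·x·exp(−c·√(ln x)) for all x ≥ 2. Let g : ℝ → ℝ be monotone with a continuous derivative on [2, ∞). Then there is a constant C > 0 such that for all x ≥ 2: |∑_{p prime, p ≤ x, p ∈ f} g(p) − d·∫_2^x g(t)/ln t dt| ≤ C·( |g(x)|·x·exp(−c·√(ln x)) + ∫_2^x t·|g'(t)|·exp(−c·√(ln t)) dt ). -/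
open Filter

open MeasureTheory intervalIntegral

open scoped Classical in
noncomputable def cind (f : Set ℕ) : ℕ → ℝ := fun n => if n.Prime ∧ n ∈ f then 1 else 0

open scoped Classical in
lemma primeCountIn_eq_card (f : Set ℕ) (t : ℝ) (ht : 0 ≤ t) :
    primeCountIn f t =
      ((Finset.range (⌊t⌋₊ + 1)).filter (fun p => p.Prime ∧ p ∈ f)).card := by
  rw [primeCountIn, ← Set.ncard_coe_finset]
  congr 1
  ext p
  simp only [Finset.coe_filter, Finset.mem_range, Set.mem_setOf_eq]
  constructor
  · rintro ⟨h1, h2, h3⟩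
    exact ⟨Nat.lt_succ_of_le ((Nat.le_floor_iff ht).mpr h3), h1, h2⟩
  · rintro ⟨h1, h2, h3⟩
    exact ⟨h2, h3, (Nat.le_floor_iff ht).mp (Nat.lt_succ_iff.mp h1)⟩

lemma sum_cind_eq (f : Set ℕ) (t : ℝ) (ht : 0 ≤ t) :
    ∑ k ∈ Finset.Icc 0 ⌊t⌋₊, cind f k = (primeCountIn f t : ℝ) := by
  classical
  rw [primeCountIn_eq_card f t ht, Finset.card_filter]
  push_cast
  rw [show Finset.Icc (0:ℕ) ⌊t⌋₊ = Finset.range (⌊t⌋₊ + 1) by ext k; simp [Nat.lt_succ_iff]]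
  refine Finset.sum_congr rfl fun k _ => ?_
  by_cases h : k.Prime ∧ k ∈ f <;> simp [cind, h]

lemma primeCountIn_mono (f : Set ℕ) : Monotone (fun t => (primeCountIn f t : ℝ)) := by
  intro s t hst
  simp only [Nat.cast_le]
  apply Set.ncard_le_ncard
  · rintro p ⟨h1, h2, h3⟩; exact ⟨h1, h2, h3.trans hst⟩
  · apply Set.Finite.subset (Set.finite_Icc 0 (⌊max t 0⌋₊))
    rintro p ⟨h1, h2, h3⟩
    exact Set.mem_Icc.mpr ⟨Nat.zero_le _, Nat.le_floor (h3.trans (le_max_left _ _))⟩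

lemma primeSumIn_eq_sum (f : Set ℕ) (g : ℝ → ℝ) (x : ℝ) :
    primeSumIn f g x = ∑ k ∈ Finset.Icc 0 ⌊x⌋₊, g k * cind f k := by
  classical
  rw [primeSumIn, show Finset.Icc (0:ℕ) ⌊x⌋₊ = Finset.range (⌊x⌋₊ + 1) by
    ext k; simp [Nat.lt_succ_iff]]
  rw [Finset.sum_filter]
  refine Finset.sum_congr rfl fun k _ => ?_
  by_cases h : k.Prime ∧ k ∈ f <;> simp [cind, h]

lemma primeSumIn_identity (f : Set ℕ) (g g' : ℝ → ℝ)
    (hderiv : ∀ t ∈ Set.Ici (2:ℝ), HasDerivAt g (g' t) t)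
    (hcont : ContinuousOn g' (Set.Ici (2:ℝ))) (x : ℝ) (hx : 2 ≤ x) :
    primeSumIn f g x = g x * primeCountIn f x -
      ∫ t in Set.Ioc (2:ℝ) x, g' t * primeCountIn f t := by
  classical
  have hdiff : ∀ t ∈ Set.Icc (2:ℝ) x, DifferentiableAt ℝ g t :=
    fun t ht => (hderiv t ht.1).differentiableAt
  have hint : IntegrableOn (deriv g) (Set.Icc (2:ℝ) x) := by
    refine ((hcont.mono (Set.Icc_subset_Ici_self)).integrableOn_Icc).congr_fun
      (fun t ht => ((hderiv t ht.1).deriv).symm) measurableSet_Icc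
  have habel := sum_mul_eq_sub_sub_integral_mul (cind f) (by norm_num : (0:ℝ) ≤ 2)
    hx hdiff hint
  have hfloor2 : ⌊(2:ℝ)⌋₊ = 2 := by norm_num
  rw [hfloor2] at habel
  have hIcc2 : ∑ k ∈ Finset.Icc (0:ℕ) 2, cind f k = cind f 2 := by
    rw [show Finset.Icc (0:ℕ) 2 = {0, 1, 2} by decide,
      Finset.sum_insert (by decide), Finset.sum_insert (by decide), Finset.sum_singleton]
    simp [cind, Nat.not_prime_zero, Nat.not_prime_one]
  have hIcc2' : ∑ k ∈ Finset.Icc (0:ℕ) 2, g k * cind f k = g 2 * cind f 2 := by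
    rw [show Finset.Icc (0:ℕ) 2 = {0, 1, 2} by decide,
      Finset.sum_insert (by decide), Finset.sum_insert (by decide), Finset.sum_singleton]
    simp [cind, Nat.not_prime_zero, Nat.not_prime_one]
  have h2 : (2:ℕ) ≤ ⌊x⌋₊ := Nat.le_floor (by exact_mod_cast hx)
  have hsum : primeSumIn f g x = g 2 * cind f 2 + ∑ k ∈ Finset.Ioc 2 ⌊x⌋₊, g k * cind f k := by
    rw [primeSumIn_eq_sum, show Finset.Icc (0:ℕ) ⌊x⌋₊ = Finset.Icc 0 2 ∪ Finset.Ioc 2 ⌊x⌋₊ by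
      ext k; simp; omega]
    rw [Finset.sum_union (by
      rw [Finset.disjoint_left]; intro a ha hb
      simp only [Finset.mem_Icc, Finset.mem_Ioc] at ha hb; omega), hIcc2']
  have hintcongr : (∫ t in Set.Ioc (2:ℝ) x, deriv g t * ∑ k ∈ Finset.Icc 0 ⌊t⌋₊, cind f k)
      = ∫ t in Set.Ioc (2:ℝ) x, g' t * primeCountIn f t := by
    refine setIntegral_congr_fun measurableSet_Ioc fun t ht => ?_
    rw [(hderiv t ht.1.le).deriv, sum_cind_eq f t (by linarith [ht.1] : (0:ℝ) ≤ t)]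
  rw [hsum, habel, hIcc2, hintcongr, sum_cind_eq f x (by linarith : (0:ℝ) ≤ x)]
  ring

noncomputable def Lfun (y : ℝ) : ℝ := ∫ t in (2:ℝ)..y, 1 / Real.log t

lemma q_contOn : ContinuousOn (fun t : ℝ => 1 / Real.log t) (Set.Ici (2:ℝ)) := by
  intro t ht
  have h1 : (1:ℝ) < t := lt_of_lt_of_le one_lt_two ht
  exact (ContinuousAt.div continuousAt_const
    (Real.continuousAt_log (by linarith)) (ne_of_gt (Real.log_pos h1))).continuousWithinAt

lemma q_contAt {y : ℝ} (hy : 2 ≤ y) : ContinuousAt (fun t : ℝ => 1 / Real.log t) y := by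
  have h1 : (1:ℝ) < y := lt_of_lt_of_le one_lt_two hy
  exact ContinuousAt.div continuousAt_const
    (Real.continuousAt_log (by linarith)) (ne_of_gt (Real.log_pos h1))

lemma Lfun_hasDerivAt {y : ℝ} (hy : 2 ≤ y) : HasDerivAt Lfun (1 / Real.log y) y := by
  refine intervalIntegral.integral_hasDerivAt_right
    ((q_contOn.mono ?_).intervalIntegrable)
    ((measurable_const.div Real.measurable_log).stronglyMeasurable.stronglyMeasurableAtFilter)
    (q_contAt hy)
  rw [Set.uIcc_of_le hy]
  exact fun t ht => ht.1

lemma parts_L (g g' : ℝ → ℝ)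
    (hderiv : ∀ t ∈ Set.Ici (2:ℝ), HasDerivAt g (g' t) t)
    (hcont : ContinuousOn g' (Set.Ici (2:ℝ))) (x : ℝ) (hx : 2 ≤ x) :
    (∫ t in (2:ℝ)..x, g t / Real.log t) =
      g x * Lfun x - ∫ t in (2:ℝ)..x, g' t * Lfun t := by
  have huIcc : Set.uIcc (2:ℝ) x = Set.Icc 2 x := Set.uIcc_of_le hx
  have h := intervalIntegral.integral_mul_deriv_eq_deriv_mul
    (u := g) (u' := g') (v := Lfun) (v' := fun t => 1 / Real.log t)
    (fun t ht => hderiv t (huIcc ▸ ht).1)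
    (fun t ht => Lfun_hasDerivAt (huIcc ▸ ht).1)
    ((hcont.mono (by rw [huIcc]; exact fun t ht => ht.1)).intervalIntegrable)
    ((q_contOn.mono (by rw [huIcc]; exact fun t ht => ht.1)).intervalIntegrable)
  have hL2 : Lfun 2 = 0 := intervalIntegral.integral_same
  simp only [hL2, mul_zero, sub_zero] at h
  rw [← h]
  refine intervalIntegral.integral_congr fun t _ => ?_
  rw [div_eq_mul_one_div]

theorem stmt7 (f : Set ℕ) (d : ℝ) (hd : d ≠ 0) (c : ℝ) (hc : 0 < c)
    (C₀ : ℝ) (hC₀ : 0 < C₀)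
    (hpi : ∀ x : ℝ, 2 ≤ x →
      |(primeCountIn f x : ℝ) - d * ∫ t in (2 : ℝ)..x, 1 / Real.log t| ≤
        C₀ * x * Real.exp (-c * Real.sqrt (Real.log x)))
    (g g' : ℝ → ℝ)
    (hmono : MonotoneOn g (Set.Ici (2 : ℝ)) ∨ AntitoneOn g (Set.Ici (2 : ℝ)))
    (hderiv : ∀ t ∈ Set.Ici (2 : ℝ), HasDerivAt g (g' t) t)
    (hcont : ContinuousOn g' (Set.Ici (2 : ℝ))) :
    ∃ C : ℝ, 0 < C ∧ ∀ x : ℝ, 2 ≤ x →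
      |primeSumIn f g x - d * ∫ t in (2 : ℝ)..x, g t / Real.log t| ≤
        C * (|g x| * x * Real.exp (-c * Real.sqrt (Real.log x)) +
          ∫ t in (2 : ℝ)..x, t * |g' t| * Real.exp (-c * Real.sqrt (Real.log t))) := by
  refine ⟨C₀, hC₀, fun x hx => ?_⟩
  have hIccsub : Set.Icc (2:ℝ) x ⊆ Set.Ici 2 := fun t ht => ht.1
  set π : ℝ → ℝ := fun t => (primeCountIn f t : ℝ) with hπ
  set E : ℝ → ℝ := fun t => π t - d * Lfun t with hE
  have hEbound : ∀ t : ℝ, 2 ≤ t → |E t| ≤ C₀ * t * Real.exp (-c * Real.sqrt (Real.log t)) :=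
    fun t ht => hpi t ht
  -- continuity of g' on Icc
  have hcont' : ContinuousOn g' (Set.Icc (2:ℝ) x) := hcont.mono hIccsub
  -- integrability of g' * π on [2, x]
  obtain ⟨M, hM⟩ := isCompact_Icc.exists_bound_of_continuousOn hcont'
  have hπ_meas : Measurable π := (primeCountIn_mono f).measurable
  have hπ_nonneg : ∀ t, 0 ≤ π t := fun t => Nat.cast_nonneg _
  have I1 : IntervalIntegrable (fun t => g' t * π t) MeasureTheory.volume 2 x := by
    rw [intervalIntegrable_iff_integrableOn_Icc_of_le hx]
    refine ⟨(hcont'.aestronglyMeasurable measurableSet_Icc).mul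
        hπ_meas.aestronglyMeasurable.restrict,
      MeasureTheory.HasFiniteIntegral.restrict_of_bounded (C := M * π x)
        (by simp [Real.volume_Icc]) ?_⟩
    · rw [MeasureTheory.ae_restrict_iff' measurableSet_Icc]
      refine MeasureTheory.ae_of_all _ fun t ht => ?_
      have h1 : ‖g' t‖ ≤ M := hM t ht
      have h2 : π t ≤ π x := primeCountIn_mono f ht.2
      have hM0 : 0 ≤ M := le_trans (norm_nonneg _) h1
      calc ‖g' t * π t‖ = ‖g' t‖ * π t := by
            rw [norm_mul, Real.norm_eq_abs (π t), abs_of_nonneg (hπ_nonneg t)]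
        _ ≤ M * π x := mul_le_mul h1 h2 (hπ_nonneg t) hM0
  -- continuity / integrability of Lfun-related functions
  have hLcont : ContinuousOn Lfun (Set.Ici (2:ℝ)) :=
    fun t ht => (Lfun_hasDerivAt ht).continuousAt.continuousWithinAt
  have I2 : IntervalIntegrable (fun t => g' t * (d * Lfun t)) MeasureTheory.volume 2 x := by
    apply ContinuousOn.intervalIntegrable
    rw [Set.uIcc_of_le hx]
    exact hcont'.mul ((continuousOn_const).mul (hLcont.mono hIccsub))
  have IE : IntervalIntegrable (fun t => g' t * E t) MeasureTheory.volume 2 x := by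
    have : (fun t => g' t * E t) =
        fun t => g' t * π t - g' t * (d * Lfun t) := by funext t; simp [hE]; ring
    rw [this]; exact I1.sub I2
  -- the key identity
  have hmain : primeSumIn f g x - d * ∫ t in (2:ℝ)..x, g t / Real.log t =
      g x * E x - ∫ t in (2:ℝ)..x, g' t * E t := by
    have hid := primeSumIn_identity f g g' hderiv hcont x hx
    have hpl := parts_L g g' hderiv hcont x hx
    have hIoc : (∫ t in Set.Ioc (2:ℝ) x, g' t * π t) = ∫ t in (2:ℝ)..x, g' t * π t :=
      (intervalIntegral.integral_of_le hx).symm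
    have hsub : (∫ t in (2:ℝ)..x, g' t * E t) =
        (∫ t in (2:ℝ)..x, g' t * π t) - ∫ t in (2:ℝ)..x, g' t * (d * Lfun t) := by
      rw [← intervalIntegral.integral_sub I1 I2]
      refine intervalIntegral.integral_congr fun t _ => ?_
      simp [hE]; ring
    rw [hid, hpl, hIoc, hsub]
    have : d * (g x * Lfun x - ∫ t in (2:ℝ)..x, g' t * Lfun t) =
        g x * (d * Lfun x) - ∫ t in (2:ℝ)..x, g' t * (d * Lfun t) := by
      rw [mul_sub, ← intervalIntegral.integral_const_mul]
      congr 1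
      · ring
      · refine intervalIntegral.integral_congr fun t _ => ?_; ring
    rw [this, hE]
    simp only [hπ]
    ring
  rw [hmain]
  -- bounding
  have hb1 : |g x * E x| ≤ C₀ * (|g x| * x * Real.exp (-c * Real.sqrt (Real.log x))) := by
    rw [abs_mul]
    calc |g x| * |E x| ≤ |g x| * (C₀ * x * Real.exp (-c * Real.sqrt (Real.log x))) :=
          mul_le_mul_of_nonneg_left (hEbound x hx) (abs_nonneg _)
      _ = C₀ * (|g x| * x * Real.exp (-c * Real.sqrt (Real.log x))) := by ring
  have hRHScont : ContinuousOn
      (fun t : ℝ => C₀ * (t * |g' t| * Real.exp (-c * Real.sqrt (Real.log t))))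
      (Set.Icc (2:ℝ) x) := by
    refine continuousOn_const.mul (ContinuousOn.mul (continuousOn_id.mul hcont'.abs) ?_)
    refine (Real.continuous_exp.comp_continuousOn ?_)
    refine (continuousOn_const.mul ?_)
    exact Real.continuous_sqrt.comp_continuousOn
      (Real.continuousOn_log.mono (fun t ht => by
        simp only [Set.mem_compl_iff, Set.mem_singleton_iff]
        intro h; rw [h] at ht; exact absurd ht.1 (by norm_num)))
  have IRHS : IntervalIntegrable
      (fun t : ℝ => C₀ * (t * |g' t| * Real.exp (-c * Real.sqrt (Real.log t))))
      MeasureTheory.volume 2 x := by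
    apply ContinuousOn.intervalIntegrable
    rwa [Set.uIcc_of_le hx]
  have hb2 : |∫ t in (2:ℝ)..x, g' t * E t| ≤
      C₀ * ∫ t in (2:ℝ)..x, t * |g' t| * Real.exp (-c * Real.sqrt (Real.log t)) := by
    calc |∫ t in (2:ℝ)..x, g' t * E t| ≤ ∫ t in (2:ℝ)..x, |g' t * E t| :=
          intervalIntegral.abs_integral_le_integral_abs hx
      _ ≤ ∫ t in (2:ℝ)..x, C₀ * (t * |g' t| * Real.exp (-c * Real.sqrt (Real.log t))) := by
          refine intervalIntegral.integral_mono_on hx IE.abs IRHS fun t ht => ?_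
          rw [abs_mul]
          calc |g' t| * |E t| ≤ |g' t| * (C₀ * t * Real.exp (-c * Real.sqrt (Real.log t))) :=
                mul_le_mul_of_nonneg_left (hEbound t ht.1) (abs_nonneg _)
            _ = C₀ * (t * |g' t| * Real.exp (-c * Real.sqrt (Real.log t))) := by ring
      _ = C₀ * ∫ t in (2:ℝ)..x, t * |g' t| * Real.exp (-c * Real.sqrt (Real.log t)) :=
          intervalIntegral.integral_const_mul _ _
  calc |g x * E x - ∫ t in (2:ℝ)..x, g' t * E t| ≤
        |g x * E x| + |∫ t in (2:ℝ)..x, g' t * E t| := abs_sub _ _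
    _ ≤ C₀ * (|g x| * x * Real.exp (-c * Real.sqrt (Real.log x))) +
        C₀ * ∫ t in (2:ℝ)..x, t * |g' t| * Real.exp (-c * Real.sqrt (Real.log t)) :=
          add_le_add hb1 hb2
    _ = C₀ * (|g x| * x * Real.exp (-c * Real.sqrt (Real.log x)) +
        ∫ t in (2:ℝ)..x, t * |g' t| * Real.exp (-c * Real.sqrt (Real.log t))) := by ring
end

section
/- Let f be a set of natural numbers, d ≠ 0 a real constant, and suppose there is a constant C₀ > 0 such that |π_f(x) − d·∫_2^x dt/ln t| ≤ C₀·√x·ln x for all x ≥ 2. Let g : ℝ → ℝ be monotone with a continuous derivative on [2, ∞). Then there is a constant C > 0 such that for all x ≥ 2: |∑_{p prime, p ≤ x, p ∈ f} g(p) − d·∫_2^x g(t)/ln t dt| ≤ C·( |g(x)|·√x·ln x + ∫_2^x |g'(t)|·√t·ln t dt ). -/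
open Filter

open MeasureTheory intervalIntegral in
open scoped Classical in
lemma aux_count_s11 (f : Set ℕ) (t : ℝ) (ht : 0 ≤ t) :
    (primeCountIn f t : ℝ) =
      ∑ k ∈ Finset.Icc 0 ⌊t⌋₊, (if k.Prime ∧ k ∈ f then (1:ℝ) else 0) := by
  have hset : {p : ℕ | p.Prime ∧ p ∈ f ∧ (p : ℝ) ≤ t} =
      ↑((Finset.Icc 0 ⌊t⌋₊).filter (fun p => p.Prime ∧ p ∈ f)) := by
    ext p
    simp only [Set.mem_setOf_eq, Finset.coe_filter, Finset.mem_Icc, Nat.le_floor_iff ht,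
      Set.mem_setOf_eq, zero_le, true_and]
    tauto
  rw [primeCountIn, hset, Set.ncard_coe_finset, Finset.sum_boole]

open scoped Classical in
lemma aux_sum (f : Set ℕ) (g : ℝ → ℝ) (x : ℝ) :
    primeSumIn f g x =
      ∑ k ∈ Finset.Icc 0 ⌊x⌋₊, g k * (if k.Prime ∧ k ∈ f then (1:ℝ) else 0) := by
  rw [primeSumIn, Finset.sum_filter,
    show Finset.range (⌊x⌋₊ + 1) = Finset.Icc 0 ⌊x⌋₊ by
      rw [Finset.range_eq_Ico, Finset.Ico_add_one_right_eq_Icc]]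
  refine Finset.sum_congr rfl fun k _ => ?_
  by_cases h : k.Prime ∧ k ∈ f <;> simp [h]

open MeasureTheory intervalIntegral in
open scoped Classical in
open MeasureTheory intervalIntegral in
open scoped Classical in
theorem stmt11 (f : Set ℕ) (d : ℝ) (hd : d ≠ 0) (C₀ : ℝ) (hC₀ : 0 < C₀)
    (hpi : ∀ x : ℝ, 2 ≤ x →
      |(primeCountIn f x : ℝ) - d * ∫ t in (2 : ℝ)..x, 1 / Real.log t| ≤
        C₀ * Real.sqrt x * Real.log x)
    (g g' : ℝ → ℝ)
    (hmono : MonotoneOn g (Set.Ici (2 : ℝ)) ∨ AntitoneOn g (Set.Ici (2 : ℝ)))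
    (hderiv : ∀ t ∈ Set.Ici (2 : ℝ), HasDerivAt g (g' t) t)
    (hcont : ContinuousOn g' (Set.Ici (2 : ℝ))) :
    ∃ C : ℝ, 0 < C ∧ ∀ x : ℝ, 2 ≤ x →
      |primeSumIn f g x - d * ∫ t in (2 : ℝ)..x, g t / Real.log t| ≤
        C * (|g x| * Real.sqrt x * Real.log x +
          ∫ t in (2 : ℝ)..x, |g' t| * Real.sqrt t * Real.log t) := by
  classical
  set c : ℕ → ℝ := fun k => if k.Prime ∧ k ∈ f then (1:ℝ) else 0 with hc
  set S : ℝ → ℝ := fun t => ∑ k ∈ Finset.Icc 0 ⌊t⌋₊, c k with hSdef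
  set L : ℝ → ℝ := fun t => ∫ s in (2:ℝ)..t, 1 / Real.log s with hLdef
  have hlogpos : ∀ t : ℝ, 2 ≤ t → 0 < Real.log t := fun t ht =>
    Real.log_pos (by linarith)
  -- continuity of 1 / log on Ici 2
  have hinvlog_cat : ∀ t : ℝ, 2 ≤ t → ContinuousAt (fun s => 1 / Real.log s) t := by
    intro t ht
    exact continuousAt_const.div (Real.continuousAt_log (by linarith)) (hlogpos t ht).ne'
  have hinvlog_cont : ContinuousOn (fun s => 1 / Real.log s) (Set.Ici 2) :=
    fun t ht => (hinvlog_cat t ht).continuousWithinAt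
  have hgcont : ContinuousOn g (Set.Ici 2) :=
    fun t ht => (hderiv t ht).continuousAt.continuousWithinAt
  -- derivative of L
  have hLderiv : ∀ t : ℝ, 2 ≤ t → HasDerivAt L (1 / Real.log t) t := by
    intro t ht
    refine intervalIntegral.integral_hasDerivAt_right ?_
      ((measurable_const.div Real.measurable_log :
        Measurable fun s : ℝ => 1 / Real.log s).aestronglyMeasurable.stronglyMeasurableAtFilter)
      (hinvlog_cat t ht)
    exact (hinvlog_cont.mono (by rw [Set.uIcc_of_le ht]; exact Set.Icc_subset_Ici_self)
      ).intervalIntegrable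
  have hLcont : ContinuousOn L (Set.Ici 2) :=
    fun t ht => (hLderiv t ht).continuousAt.continuousWithinAt
  -- S is measurable
  have hSmeas : Measurable S := by
    have : S = (fun n : ℕ => ∑ k ∈ Finset.Icc 0 n, c k) ∘ Nat.floor := rfl
    rw [this]
    exact measurable_from_top.comp Nat.measurable_floor
  have hderiv_eq : ∀ t : ℝ, 2 ≤ t → deriv g t = g' t :=
    fun t ht => (hderiv t ht).deriv
  refine ⟨C₀, hC₀, fun x hx => ?_⟩
  have hIcc : Set.Icc (2:ℝ) x ⊆ Set.Ici 2 := Set.Icc_subset_Ici_self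
  have huIcc : Set.uIcc (2:ℝ) x = Set.Icc 2 x := Set.uIcc_of_le hx
  have hfl2 : (2:ℕ) ≤ ⌊x⌋₊ := Nat.le_floor (by exact_mod_cast hx)
  -- interval integrability facts
  have hg'int : IntervalIntegrable g' volume 2 x :=
    (hcont.mono (huIcc ▸ hIcc)).intervalIntegrable
  have hg'Lint : IntervalIntegrable (fun t => g' t * L t) volume 2 x :=
    ((hcont.mul hLcont).mono (huIcc ▸ hIcc)).intervalIntegrable
  have hginvlogint : IntervalIntegrable (fun t => g t * (1 / Real.log t)) volume 2 x :=
    ((hgcont.mul hinvlog_cont).mono (huIcc ▸ hIcc)).intervalIntegrable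
  -- integrability of g' * S
  have hg'Sint : IntervalIntegrable (fun t => g' t * S t) volume 2 x := by
    rw [intervalIntegrable_iff_integrableOn_Icc_of_le hx]
    have hb : IntegrableOn (fun t => |g' t| * ((⌊x⌋₊ : ℝ) + 1)) (Set.Icc 2 x) :=
      (((hcont.mono hIcc).abs.mul continuousOn_const).integrableOn_Icc)
    refine Integrable.mono' hb ?_ ?_
    · exact (((hcont.mono hIcc).aestronglyMeasurable measurableSet_Icc).mul
        (hSmeas.aestronglyMeasurable.restrict))
    · filter_upwards [ae_restrict_mem measurableSet_Icc] with t ht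
      have hS_bound : |S t| ≤ (⌊x⌋₊ : ℝ) + 1 := by
        calc |S t| ≤ ∑ k ∈ Finset.Icc 0 ⌊t⌋₊, |c k| := Finset.abs_sum_le_sum_abs _ _
        _ ≤ ∑ k ∈ Finset.Icc 0 ⌊t⌋₊, 1 := by
            refine Finset.sum_le_sum fun k _ => ?_
            by_cases h : k.Prime ∧ k ∈ f <;> simp [hc, h]
        _ = ((⌊t⌋₊ : ℝ) + 1) := by simp [Nat.card_Icc]
        _ ≤ (⌊x⌋₊ : ℝ) + 1 := by
            have := Nat.floor_le_floor ht.2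
            exact_mod_cast Nat.succ_le_succ this
      rw [Real.norm_eq_abs, abs_mul]
      exact mul_le_mul_of_nonneg_left hS_bound (abs_nonneg _)
  -- Abel summation
  have habel : ∑ k ∈ Finset.Ioc 2 ⌊x⌋₊, g k * c k =
      g x * S x - g 2 * S 2 - ∫ t in (2:ℝ)..x, g' t * S t := by
    have h0 : (0:ℝ) ≤ 2 := by norm_num
    have hdiff : ∀ t ∈ Set.Icc (2:ℝ) x, DifferentiableAt ℝ g t :=
      fun t ht => (hderiv t ht.1).differentiableAt
    have hint : IntegrableOn (deriv g) (Set.Icc (2:ℝ) x) := by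
      refine IntegrableOn.congr_fun ((hcont.mono hIcc).integrableOn_Icc)
        (fun t ht => (hderiv_eq t ht.1).symm) measurableSet_Icc
    have := sum_mul_eq_sub_sub_integral_mul c h0 hx hdiff hint
    rw [show ⌊(2:ℝ)⌋₊ = 2 by norm_num] at this
    rw [this, ← intervalIntegral.integral_of_le hx]
    have : (∫ t in (2:ℝ)..x, deriv g t * ∑ k ∈ Finset.Icc 0 ⌊t⌋₊, c k)
        = ∫ t in (2:ℝ)..x, g' t * S t := by
      refine intervalIntegral.integral_congr fun t ht => ?_
      rw [huIcc] at ht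
      rw [hderiv_eq t ht.1]
    rw [this]
    simp only [hSdef, Nat.floor_ofNat]
  -- the value of S at 2
  have hS2 : S (2:ℝ) = c 2 := by
    have h2 : ⌊(2:ℝ)⌋₊ = 2 := by norm_num
    have h02 : Finset.Icc 0 2 = ({0, 1, 2} : Finset ℕ) := rfl
    simp only [hSdef, h2, h02]
    rw [show ({0,1,2} : Finset ℕ) = insert 0 (insert 1 {2}) from rfl,
      Finset.sum_insert (by decide), Finset.sum_insert (by decide), Finset.sum_singleton]
    simp [hc, Nat.not_prime_zero, Nat.not_prime_one]
  -- split of the sum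
  have hsplit : ∑ k ∈ Finset.Icc 0 ⌊x⌋₊, g k * c k
      = g 2 * c 2 + ∑ k ∈ Finset.Ioc 2 ⌊x⌋₊, g k * c k := by
    have hun : Finset.Icc 0 ⌊x⌋₊ = Finset.Icc 0 2 ∪ Finset.Ioc 2 ⌊x⌋₊ := by
      ext k
      simp only [Finset.mem_Icc, Finset.mem_Ioc, Finset.mem_union]
      omega
    have hdisj : Disjoint (Finset.Icc 0 2) (Finset.Ioc 2 ⌊x⌋₊) := by
      simp only [Finset.disjoint_left, Finset.mem_Icc, Finset.mem_Ioc]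
      omega
    rw [hun, Finset.sum_union hdisj]
    congr 1
    have h02 : Finset.Icc 0 2 = ({0, 1, 2} : Finset ℕ) := rfl
    rw [h02]
    norm_num [hc, Nat.not_prime_zero, Nat.not_prime_one]
  -- the main Abel identity
  have hmain : primeSumIn f g x = g x * S x - ∫ t in (2:ℝ)..x, g' t * S t := by
    rw [aux_sum]
    have : (∑ k ∈ Finset.Icc 0 ⌊x⌋₊, g k *
        (if k.Prime ∧ k ∈ f then (1:ℝ) else 0)) = ∑ k ∈ Finset.Icc 0 ⌊x⌋₊, g k * c k := rfl
    rw [this, hsplit, habel, hS2]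
    ring
  -- integration by parts for the main term
  have hinvlogint : IntervalIntegrable (fun t => 1 / Real.log t) volume 2 x :=
    (hinvlog_cont.mono (huIcc ▸ hIcc)).intervalIntegrable
  have hL2 : L (2:ℝ) = 0 := by simp [hLdef]
  have hibp : ∫ t in (2:ℝ)..x, g t / Real.log t
      = g x * L x - ∫ t in (2:ℝ)..x, g' t * L t := by
    have h1 : ∫ t in (2:ℝ)..x, (g' t * L t + g t * (1 / Real.log t))
        = g x * L x - g 2 * L 2 :=
      intervalIntegral.integral_deriv_mul_eq_sub
        (fun t ht => hderiv t (huIcc ▸ ht).1) (fun t ht => hLderiv t (huIcc ▸ ht).1)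
        hg'int hinvlogint
    rw [intervalIntegral.integral_add hg'Lint hginvlogint, hL2] at h1
    have h2 : ∫ t in (2:ℝ)..x, g t / Real.log t
        = ∫ t in (2:ℝ)..x, g t * (1 / Real.log t) := by
      refine intervalIntegral.integral_congr fun t ht => ?_
      ring
    rw [h2]
    linarith
  -- key identity
  have heq : (fun t => g' t * (S t - d * L t))
      = fun t => g' t * S t - d * (g' t * L t) := by
    funext t; ring
  have hEint : IntervalIntegrable (fun t => g' t * (S t - d * L t)) volume 2 x := by
    rw [heq]; exact hg'Sint.sub (hg'Lint.const_mul d)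
  have key : primeSumIn f g x - d * ∫ t in (2:ℝ)..x, g t / Real.log t
      = g x * (S x - d * L x) - ∫ t in (2:ℝ)..x, g' t * (S t - d * L t) := by
    have hsub : (∫ t in (2:ℝ)..x, g' t * (S t - d * L t))
        = (∫ t in (2:ℝ)..x, g' t * S t) - d * ∫ t in (2:ℝ)..x, g' t * L t := by
      rw [heq, intervalIntegral.integral_sub hg'Sint (hg'Lint.const_mul d),
        intervalIntegral.integral_const_mul]
    rw [hmain, hibp, hsub]
    ring
  -- the error bound
  have hE : ∀ t : ℝ, 2 ≤ t → |S t - d * L t| ≤ C₀ * Real.sqrt t * Real.log t := by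
    intro t ht
    have h := hpi t ht
    rwa [aux_count_s11 f t (by linarith)] at h
  -- integrability of the bound
  have hbcont : ContinuousOn (fun t => C₀ * (|g' t| * Real.sqrt t * Real.log t))
      (Set.Icc 2 x) := by
    refine continuousOn_const.mul ?_
    refine (((hcont.mono hIcc).abs.mul Real.continuous_sqrt.continuousOn).mul
      (Real.continuousOn_log.mono ?_))
    intro t ht
    simp only [Set.mem_compl_iff, Set.mem_singleton_iff]
    have := ht.1
    intro h; rw [h] at this; norm_num at this
  have hbint : IntervalIntegrable (fun t => C₀ * (|g' t| * Real.sqrt t * Real.log t))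
      volume 2 x := (hbcont.mono (le_of_eq huIcc)).intervalIntegrable
  have habs : |∫ t in (2:ℝ)..x, g' t * (S t - d * L t)|
      ≤ ∫ t in (2:ℝ)..x, C₀ * (|g' t| * Real.sqrt t * Real.log t) := by
    calc |∫ t in (2:ℝ)..x, g' t * (S t - d * L t)|
        ≤ ∫ t in (2:ℝ)..x, |g' t * (S t - d * L t)| :=
          intervalIntegral.abs_integral_le_integral_abs hx
      _ ≤ ∫ t in (2:ℝ)..x, C₀ * (|g' t| * Real.sqrt t * Real.log t) := by
          refine intervalIntegral.integral_mono_on hx hEint.abs hbint fun t ht => ?_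
          rw [abs_mul]
          calc |g' t| * |S t - d * L t|
              ≤ |g' t| * (C₀ * Real.sqrt t * Real.log t) :=
                mul_le_mul_of_nonneg_left (hE t ht.1) (abs_nonneg _)
            _ = C₀ * (|g' t| * Real.sqrt t * Real.log t) := by ring
  rw [key]
  calc |g x * (S x - d * L x) - ∫ t in (2:ℝ)..x, g' t * (S t - d * L t)|
      ≤ |g x * (S x - d * L x)| + |∫ t in (2:ℝ)..x, g' t * (S t - d * L t)| :=
        abs_sub _ _
    _ ≤ |g x| * (C₀ * Real.sqrt x * Real.log x)
        + ∫ t in (2:ℝ)..x, C₀ * (|g' t| * Real.sqrt t * Real.log t) := by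
        refine add_le_add ?_ habs
        rw [abs_mul]
        exact mul_le_mul_of_nonneg_left (hE x hx) (abs_nonneg _)
    _ = C₀ * (|g x| * Real.sqrt x * Real.log x
        + ∫ t in (2:ℝ)..x, |g' t| * Real.sqrt t * Real.log t) := by
        rw [intervalIntegral.integral_const_mul]
        ring
end

section
/- Let a, b : ℕ → ℝ be sequences of nonnegative reals, and for a real t ≥ 1 set A(t) = ∑_{m ≤ ⌊t⌋} a_m and B(t) = ∑_{m ≤ ⌊t⌋} b_m. Let g : ℝ → ℝ be continuously differentiable with g'(t) ≥ 0 on [1, ∞). Suppose B(n) > 0 for all sufficiently large n, A(n)/B(n) → 1 as n → ∞, and ∫_1^n B(t)·g'(t) dt → ∞ as n → ∞. Then ∫_1^n A(t)·g'(t) dt / ∫_1^n B(t)·g'(t) dt → 1 as n → ∞. -/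
open Filter

/-- The partial-sum step function `A(t) = ∑_{m ≤ ⌊t⌋} a m`. -/
noncomputable def partialSum (a : ℕ → ℝ) (t : ℝ) : ℝ :=
  ∑ m ∈ Finset.range (⌊t⌋₊ + 1), a m

lemma partialSum_mono {a : ℕ → ℝ} (ha : ∀ m, 0 ≤ a m) : Monotone (partialSum a) := by
  intro s t hst
  apply Finset.sum_le_sum_of_subset_of_nonneg
  · exact Finset.range_subset_range.2 (by have := Nat.floor_mono hst; omega)
  · intro i _ _; exact ha i

lemma partialSum_nonneg {a : ℕ → ℝ} (ha : ∀ m, 0 ≤ a m) (t : ℝ) : 0 ≤ partialSum a t :=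
  Finset.sum_nonneg fun i _ => ha i

lemma partialSum_floor (a : ℕ → ℝ) (t : ℝ) :
    partialSum a t = partialSum a ((⌊t⌋₊ : ℕ) : ℝ) := by
  simp [partialSum, Nat.floor_natCast]

lemma partialSum_intg {a : ℕ → ℝ} (ha : ∀ m, 0 ≤ a m) {g' : ℝ → ℝ}
    (hcont : ContinuousOn g' (Set.Ici 1)) {x y : ℝ} (hx : 1 ≤ x) (hy : 1 ≤ y) :
    IntervalIntegrable (fun t => partialSum a t * g' t) MeasureTheory.volume x y :=
  ((partialSum_mono ha).intervalIntegrable).mul_continuousOn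
    (hcont.mono fun t ht => le_trans (le_min hx hy) ht.1)

theorem stmt14 (a b : ℕ → ℝ) (ha : ∀ m, 0 ≤ a m) (hb : ∀ m, 0 ≤ b m)
    (g g' : ℝ → ℝ)
    (hderiv : ∀ t ∈ Set.Ici (1 : ℝ), HasDerivAt g (g' t) t)
    (hcont : ContinuousOn g' (Set.Ici (1 : ℝ)))
    (hg' : ∀ t ∈ Set.Ici (1 : ℝ), 0 ≤ g' t)
    (hBpos : ∀ᶠ n : ℕ in atTop, 0 < partialSum b n)
    (hratio : Tendsto (fun n : ℕ => partialSum a n / partialSum b n)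
      atTop (nhds 1))
    (hint : Tendsto (fun n : ℕ => ∫ t in (1 : ℝ)..(n : ℝ), partialSum b t * g' t)
      atTop atTop) :
    Tendsto (fun n : ℕ =>
        (∫ t in (1 : ℝ)..(n : ℝ), partialSum a t * g' t) /
          ∫ t in (1 : ℝ)..(n : ℝ), partialSum b t * g' t)
      atTop (nhds 1) := by
  set Ia : ℕ → ℝ := fun n => ∫ t in (1 : ℝ)..(n : ℝ), partialSum a t * g' t with hIa
  set Ib : ℕ → ℝ := fun n => ∫ t in (1 : ℝ)..(n : ℝ), partialSum b t * g' t with hIb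
  have hIbpos : ∀ᶠ n in atTop, 0 < Ib n := hint.eventually_gt_atTop 0
  have key : Tendsto (fun n => (Ia n - Ib n) / Ib n) atTop (nhds 0) := by
    rw [Metric.tendsto_atTop]
    intro ε hε
    -- eventual pointwise comparison at integers
    have h1 : ∀ᶠ n : ℕ in atTop, |partialSum a n / partialSum b n - 1| < ε / 2 := by
      have := Metric.tendsto_nhds.1 hratio (ε / 2) (by positivity)
      simpa [Real.dist_eq] using this
    have h2 : ∀ᶠ n : ℕ in atTop,
        |partialSum a (n : ℝ) - partialSum b (n : ℝ)| ≤ ε / 2 * partialSum b (n : ℝ) := by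
      filter_upwards [h1, hBpos] with n hn hbn
      have h := abs_lt.1 hn
      have e : partialSum a (n:ℝ) / partialSum b (n:ℝ) * partialSum b (n:ℝ)
          = partialSum a (n:ℝ) := div_mul_cancel₀ _ hbn.ne'
      have u1 := mul_lt_mul_of_pos_right h.2 hbn
      have u2 := mul_lt_mul_of_pos_right h.1 hbn
      rw [abs_le]
      constructor <;> nlinarith [u1, u2, e]
    obtain ⟨N₀, hN₀⟩ := eventually_atTop.1 h2
    set N : ℕ := max N₀ 1 with hN
    have hN1 : (1 : ℝ) ≤ (N : ℝ) := by exact_mod_cast Nat.le_max_right N₀ 1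
    have hAB : ∀ m : ℕ, N ≤ m →
        |partialSum a (m : ℝ) - partialSum b (m : ℝ)| ≤ ε / 2 * partialSum b (m : ℝ) :=
      fun m hm => hN₀ m (le_trans (Nat.le_max_left N₀ 1) hm)
    -- the constant C
    set C : ℝ := ∫ t in (1 : ℝ)..(N : ℝ),
        |partialSum a t * g' t - partialSum b t * g' t| with hC
    have hC0 : 0 ≤ C :=
      intervalIntegral.integral_nonneg hN1 fun u _ => abs_nonneg _
    have hbig : ∀ᶠ n : ℕ in atTop, Ib n > max (2 * C / ε) 0 :=
      hint.eventually_gt_atTop _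
    obtain ⟨N₂, hN₂⟩ := eventually_atTop.1 hbig
    refine ⟨max N N₂, fun n hn => ?_⟩
    have hnN : N ≤ n := le_trans (le_max_left _ _) hn
    have hnN2 : N₂ ≤ n := le_trans (le_max_right _ _) hn
    have hnR : (N : ℝ) ≤ (n : ℝ) := by exact_mod_cast hnN
    have hn1 : (1 : ℝ) ≤ (n : ℝ) := le_trans hN1 hnR
    have hIbn := hN₂ n hnN2
    have hIbn0 : 0 < Ib n := lt_of_le_of_lt (le_max_right _ _) hIbn
    have hIbnC : 2 * C / ε < Ib n := lt_of_le_of_lt (le_max_left _ _) hIbn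
    -- integrability
    have hia1 := partialSum_intg ha hcont (le_refl (1:ℝ)) hN1
    have hib1 := partialSum_intg hb hcont (le_refl (1:ℝ)) hN1
    have hia2 := partialSum_intg ha hcont hN1 hn1
    have hib2 := partialSum_intg hb hcont hN1 hn1
    -- split the integrals
    have hsplit : Ia n - Ib n =
        ((∫ t in (1 : ℝ)..(N : ℝ), partialSum a t * g' t) -
          ∫ t in (1 : ℝ)..(N : ℝ), partialSum b t * g' t) +
        ((∫ t in (N : ℝ)..(n : ℝ), partialSum a t * g' t) -
          ∫ t in (N : ℝ)..(n : ℝ), partialSum b t * g' t) := by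
      have e1 := intervalIntegral.integral_add_adjacent_intervals hia1 hia2
      have e2 := intervalIntegral.integral_add_adjacent_intervals hib1 hib2
      simp only [hIa, hIb]
      linarith
    -- bound the first piece by C
    have hfirst : |(∫ t in (1 : ℝ)..(N : ℝ), partialSum a t * g' t) -
          ∫ t in (1 : ℝ)..(N : ℝ), partialSum b t * g' t| ≤ C := by
      rw [← intervalIntegral.integral_sub hia1 hib1]
      exact intervalIntegral.abs_integral_le_integral_abs hN1
    -- bound the second piece
    have hsecond : |(∫ t in (N : ℝ)..(n : ℝ), partialSum a t * g' t) -
          ∫ t in (N : ℝ)..(n : ℝ), partialSum b t * g' t| ≤ ε / 2 * Ib n := by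
      rw [← intervalIntegral.integral_sub hia2 hib2]
      have habs := intervalIntegral.abs_integral_le_integral_abs
        (μ := MeasureTheory.volume)
        (f := fun t => partialSum a t * g' t - partialSum b t * g' t) hnR
      have hmono : (∫ t in (N : ℝ)..(n : ℝ),
            |partialSum a t * g' t - partialSum b t * g' t|)
          ≤ ∫ t in (N : ℝ)..(n : ℝ), ε / 2 * (partialSum b t * g' t) := by
        apply intervalIntegral.integral_mono_on hnR ((hia2.sub hib2).abs)
          (hib2.const_mul (ε / 2))
        intro t ht
        have ht1 : (1 : ℝ) ≤ t := le_trans hN1 ht.1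
        have hg't : 0 ≤ g' t := hg' t (Set.mem_Ici.2 ht1)
        have hfl : N ≤ ⌊t⌋₊ := Nat.le_floor (by exact_mod_cast ht.1)
        have hbd := hAB ⌊t⌋₊ hfl
        rw [← partialSum_floor, ← partialSum_floor] at hbd
        calc |partialSum a t * g' t - partialSum b t * g' t|
            = |partialSum a t - partialSum b t| * g' t := by
              rw [← sub_mul, abs_mul, abs_of_nonneg hg't]
          _ ≤ ε / 2 * partialSum b t * g' t := mul_le_mul_of_nonneg_right hbd hg't
          _ = ε / 2 * (partialSum b t * g' t) := by ring
      have hval : (∫ t in (N : ℝ)..(n : ℝ), ε / 2 * (partialSum b t * g' t))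
          = ε / 2 * ∫ t in (N : ℝ)..(n : ℝ), partialSum b t * g' t :=
        intervalIntegral.integral_const_mul _ _
      have htail : (∫ t in (N : ℝ)..(n : ℝ), partialSum b t * g' t) ≤ Ib n := by
        have e2 := intervalIntegral.integral_add_adjacent_intervals hib1 hib2
        have hpos : 0 ≤ ∫ t in (1 : ℝ)..(N : ℝ), partialSum b t * g' t :=
          intervalIntegral.integral_nonneg hN1 fun u hu =>
            mul_nonneg (partialSum_nonneg hb u) (hg' u (Set.mem_Ici.2 hu.1))
        simp only [hIb]
        linarith
      calc |∫ t in (N : ℝ)..(n : ℝ),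
            (partialSum a t * g' t - partialSum b t * g' t)| ≤ _ := habs
        _ ≤ ε / 2 * ∫ t in (N : ℝ)..(n : ℝ), partialSum b t * g' t := by
            rw [← hval]; exact hmono
        _ ≤ ε / 2 * Ib n := by
            apply mul_le_mul_of_nonneg_left htail (by positivity)
    -- combine
    have htotal : |Ia n - Ib n| ≤ C + ε / 2 * Ib n := by
      rw [hsplit]
      exact le_trans (abs_add_le _ _) (add_le_add hfirst hsecond)
    have hClt : C / Ib n < ε / 2 := by
      rw [div_lt_iff₀ hIbn0]
      rw [div_lt_iff₀ hε] at hIbnC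
      nlinarith
    rw [Real.dist_eq, sub_zero, abs_div, abs_of_pos hIbn0]
    calc |Ia n - Ib n| / Ib n ≤ (C + ε / 2 * Ib n) / Ib n := by gcongr
      _ = C / Ib n + ε / 2 := by
          rw [add_div, mul_div_assoc, div_self hIbn0.ne', mul_one]
      _ < ε / 2 + ε / 2 := by linarith
      _ = ε := by ring
  have hfinal := key.add (tendsto_const_nhds (x := (1 : ℝ)))
  rw [zero_add] at hfinal
  refine hfinal.congr' ?_
  filter_upwards [hIbpos] with n hn
  show (Ia n - Ib n) / Ib n + 1 = Ia n / Ib n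
  rw [div_add_one hn.ne', sub_add_cancel]
end
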